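/- arXiv:1507.03195 — 3 statements merged into one kernel-verified Lean document; each statement's English description precedes it below -/
import Mathlib

section
/- Winning path lemma: Let G be a finite simple graph, let C = {1,2,3,4} be a set of 4 colors, and consider a position (a partial proper coloring of G with colors from C) with Alice to move. Suppose G contains a path P = v_0 v_1 … v_d all of whose vertices are uncolored, where each v_i has degree at least 2 and has at least 8 uncolored pendant neighbors (v_i-leaves), and suppose there are two distinct colors a, b with {a, b} ⊆ Φ(v_0). If either (i) d is odd and {a, b} ⊆ Φ(v_d), or (ii) d is even and C \ {a, b} ⊆ Φ(v_d), then the position is winning for Bob: Bob has a strategy ensuring that some vertex of G is never colored. -/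
namespace GCN

/-- The player whose turn it is. -/
inductive Player : Type
  | alice : Player
  | bob : Player

variable {V α : Type}

/-- A move consisting of coloring the uncolored vertex `v` with color `a` is legal in the
partial coloring `c` if `v` is uncolored and no neighbor of `v` has color `a`. -/
def legalMove (G : SimpleGraph V) (c : V → Option α) (v : V) (a : α) : Prop :=
  c v = none ∧ ∀ u, G.Adj v u → c u ≠ some a

/-- The partial coloring obtained by coloring vertex `v` with color `a`. -/
def applyMove [DecidableEq V] (c : V → Option α) (v : V) (a : α) : V → Option α :=
  Function.update c v (some a)

/-- `BobWins G p c` : in the coloring game on `G` starting from the partial coloring `c` with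
player `p` to move (the moving player must color an uncolored vertex properly whenever a legal
move exists; the game ends when no legal move exists), Bob has a strategy guaranteeing that the
game ends with some vertex uncolored. -/
inductive BobWins [DecidableEq V] (G : SimpleGraph V) : Player → (V → Option α) → Prop
  | endPos (p : Player) (c : V → Option α)
      (hend : ∀ v a, ¬ legalMove G c v a) (hunc : ∃ v, c v = none) : BobWins G p c
  | aliceMove (c : V → Option α)
      (hmoves : ∃ v a, legalMove G c v a)
      (h : ∀ v a, legalMove G c v a → BobWins G .bob (applyMove c v a)) :
      BobWins G .alice c
  | bobMove (c : V → Option α) (v : V) (a : α)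
      (hmove : legalMove G c v a)
      (h : BobWins G .alice (applyMove c v a)) : BobWins G .bob c

/-- `AliceWins G p c` : in the coloring game on `G` starting from the partial coloring `c` with
player `p` to move, Alice has a strategy guaranteeing that the game ends with all vertices
colored. -/
inductive AliceWins [DecidableEq V] (G : SimpleGraph V) : Player → (V → Option α) → Prop
  | endPos (p : Player) (c : V → Option α)
      (hend : ∀ v a, ¬ legalMove G c v a) (hall : ∀ v, c v ≠ none) : AliceWins G p c
  | aliceMove (c : V → Option α) (v : V) (a : α)
      (hmove : legalMove G c v a)
      (h : AliceWins G .bob (applyMove c v a)) : AliceWins G .alice c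
  | bobMove (c : V → Option α)
      (hmoves : ∃ v a, legalMove G c v a)
      (h : ∀ v a, legalMove G c v a → AliceWins G .alice (applyMove c v a)) :
      AliceWins G .bob c

/-- The game chromatic number of `G` : the least number `k` of colors such that Alice has a
winning strategy in the coloring game on `G` played with `k` colors (Alice moving first,
starting from the everywhere-uncolored position). -/
noncomputable def gameChromaticNumber [DecidableEq V] (G : SimpleGraph V) : ℕ :=
  sInf {k : ℕ | AliceWins (α := Fin k) G .alice (fun _ => none)}

/-- `c` is a partial proper coloring of `G` : adjacent colored vertices get distinct colors. -/
def ProperPartial (G : SimpleGraph V) (c : V → Option α) : Prop :=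
  ∀ ⦃u v : V⦄, G.Adj u v → ∀ a : α, c u = some a → c v ≠ some a

/-- `Phi G c v` : the set of colors appearing (under `c`) on the neighbors of `v`. -/
def Phi (G : SimpleGraph V) (c : V → Option α) (v : V) : Set α :=
  {a : α | ∃ u, G.Adj v u ∧ c u = some a}

end GCN

set_option linter.unusedSectionVars false
set_option linter.unusedVariables false

namespace WPL
open GCN

variable {V : Type} [Fintype V] [DecidableEq V] (G : SimpleGraph V) [DecidableRel G.Adj]

def cnt (c : V → Option (Fin 4)) : ℕ := (Finset.univ.filter fun v => c v = none).card

def PhiF (c : V → Option (Fin 4)) (v : V) : Finset (Fin 4) :=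
  Finset.univ.filter fun a => ∃ u, G.Adj v u ∧ c u = some a

def ULF (c : V → Option (Fin 4)) (v : V) : Finset V :=
  Finset.univ.filter fun u => G.Adj v u ∧ G.degree u = 1 ∧ c u = none

variable {G}

@[simp] lemma mem_PhiF {c v} {a : Fin 4} : a ∈ PhiF G c v ↔ ∃ u, G.Adj v u ∧ c u = some a := by
  simp [PhiF]

@[simp] lemma mem_ULF {c v u} : u ∈ ULF G c v ↔ G.Adj v u ∧ G.degree u = 1 ∧ c u = none := by
  simp [ULF]

lemma mem_PhiF_iff_Phi {c v} {a : Fin 4} : a ∈ PhiF G c v ↔ a ∈ Phi G c v := by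
  simp [Phi]

@[simp] lemma applyMove_self {c : V → Option (Fin 4)} {v x} : applyMove c v x v = some x := by
  simp [applyMove]

lemma applyMove_ne {c : V → Option (Fin 4)} {v x u} (h : u ≠ v) : applyMove c v x u = c u := by
  simp [applyMove, Function.update_of_ne h]

lemma cnt_applyMove {c : V → Option (Fin 4)} {v x} (hv : c v = none) :
    cnt (applyMove c v x) + 1 = cnt c := by
  classical
  have h1 : (Finset.univ.filter fun u => applyMove c v x u = none)
      = (Finset.univ.filter fun u => c u = none).erase v := by
    ext u
    by_cases hu : u = v
    · subst hu; rw [Finset.mem_filter, Finset.mem_erase]; simp [applyMove]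
    · simp [applyMove_ne hu, hu]
  have hv' : v ∈ Finset.univ.filter fun u => c u = none := by simp [hv]
  rw [cnt, cnt, h1, Finset.card_erase_of_mem hv']
  have : 0 < (Finset.univ.filter fun u => c u = none).card := Finset.card_pos.2 ⟨v, hv'⟩
  omega

lemma PhiF_mono {c : V → Option (Fin 4)} {v x} (hv : c v = none) (w : V) :
    PhiF G c w ⊆ PhiF G (applyMove c v x) w := by
  intro a ha
  rw [mem_PhiF] at ha ⊢
  obtain ⟨u, hu, hcu⟩ := ha
  have huv : u ≠ v := by rintro rfl; rw [hv] at hcu; exact Option.some_ne_none a hcu.symm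
  exact ⟨u, hu, by rw [applyMove_ne huv]; exact hcu⟩

lemma mem_PhiF_applyMove {c : V → Option (Fin 4)} {v x w} (h : G.Adj w v) :
    x ∈ PhiF G (applyMove c v x) w := mem_PhiF.2 ⟨v, h, applyMove_self⟩

lemma ULF_applyMove {c : V → Option (Fin 4)} {v x} (w : V) :
    ULF G (applyMove c v x) w = (ULF G c w).erase v := by
  ext u
  by_cases hu : u = v
  · subst hu; simp [applyMove]
  · simp [applyMove_ne hu, hu]

lemma card_PhiF_le_three {c : V → Option (Fin 4)} {m y} (hy : y ∉ PhiF G c m) :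
    (PhiF G c m).card ≤ 3 := by
  have hsub : PhiF G c m ⊆ Finset.univ.erase y := by
    intro a ha
    exact Finset.mem_erase.2 ⟨by rintro rfl; exact hy ha, Finset.mem_univ a⟩
  have := Finset.card_le_card hsub
  rwa [Finset.card_erase_of_mem (Finset.mem_univ y), Finset.card_univ, Fintype.card_fin] at this

lemma card_PhiF_le_four {c : V → Option (Fin 4)} {m : V} : (PhiF G c m).card ≤ 4 := by
  have := Finset.card_le_card (Finset.subset_univ (PhiF G c m))
  rwa [Finset.card_univ, Fintype.card_fin] at this

lemma leaf_unique_nbr {u w : V} (hdeg : G.degree u = 1) (h : G.Adj w u) :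
    ∀ z, G.Adj u z → z = w := by
  intro z hz
  rw [← SimpleGraph.card_neighborFinset_eq_degree] at hdeg
  obtain ⟨a, ha⟩ := Finset.card_eq_one.1 hdeg
  have hw : w ∈ G.neighborFinset u := by rw [SimpleGraph.mem_neighborFinset]; exact h.symm
  have hz' : z ∈ G.neighborFinset u := by rw [SimpleGraph.mem_neighborFinset]; exact hz
  rw [ha, Finset.mem_singleton] at hw hz'
  rw [hz', hw]

lemma leaf_legal {c : V → Option (Fin 4)} {u w : V} (hu : u ∈ ULF G c w) (hw : c w = none)
    (y : Fin 4) : legalMove G c u y := by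
  rw [mem_ULF] at hu
  refine ⟨hu.2.2, fun z hz => ?_⟩
  rw [leaf_unique_nbr hu.2.1 hu.1 z hz, hw]
  exact fun h => (Option.some_ne_none y) h.symm

lemma ULF_other {c : V → Option (Fin 4)} {u w w' : V} (hu : u ∈ ULF G c w) (hw' : w' ≠ w) :
    u ∉ ULF G c w' := by
  rw [mem_ULF] at hu ⊢
  rintro ⟨hadj, -, -⟩
  exact hw' (leaf_unique_nbr hu.2.1 hu.1 w' hadj.symm)

lemma fin4_cases {p q r s : Fin 4} (hpq : p ≠ q) (hpr : p ≠ r) (hps : p ≠ s)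
    (hqr : q ≠ r) (hqs : q ≠ s) (hrs : r ≠ s) (x : Fin 4) :
    x = p ∨ x = q ∨ x = r ∨ x = s := by
  have huniv : ({p, q, r, s} : Finset (Fin 4)) = Finset.univ := by
    apply Finset.eq_univ_of_card
    rw [Finset.card_insert_of_notMem (by simp [hpq, hpr, hps]),
      Finset.card_insert_of_notMem (by simp [hqr, hqs]),
      Finset.card_insert_of_notMem (by simp [hrs]), Finset.card_singleton, Fintype.card_fin]
  have := huniv ▸ Finset.mem_univ x
  simpa using this

end WPL

namespace WPL
open GCN
variable {V : Type} [Fintype V] [DecidableEq V] {G : SimpleGraph V} [DecidableRel G.Adj]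

/-- some uncolored vertex sees all four colors: it can never be colored. -/
def Trapped (G : SimpleGraph V) [DecidableRel G.Adj] (c : V → Option (Fin 4)) : Prop :=
  ∃ v, c v = none ∧ ∀ y : Fin 4, y ∈ PhiF G c v

lemma trapped_applyMove {c : V → Option (Fin 4)} {z y'} (h : Trapped G c)
    (hleg : legalMove G c z y') : Trapped G (applyMove c z y') := by
  obtain ⟨v, hv, hall⟩ := h
  have hvz : v ≠ z := by
    rintro rfl
    obtain ⟨u, hu, hcu⟩ := mem_PhiF.1 (hall y')
    exact hleg.2 u hu hcu
  exact ⟨v, by rw [applyMove_ne hvz]; exact hv, fun y => PhiF_mono hleg.1 v (hall y)⟩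

lemma trapped_bobWins : ∀ N (c : V → Option (Fin 4)), cnt c ≤ N → Trapped G c →
    ∀ p, BobWins G p c := by
  intro N
  induction N with
  | zero =>
    intro c hc ⟨v, hv, _⟩ p
    exfalso
    have : v ∈ Finset.univ.filter fun u => c u = none := by simp [hv]
    have := Finset.card_pos.2 ⟨v, this⟩
    rw [cnt] at hc; omega
  | succ N ih =>
    intro c hc htr p
    by_cases hmv : ∃ z y', legalMove G c z y'
    · cases p with
      | alice =>
        refine BobWins.aliceMove c hmv fun z y' hzy => ?_
        have h1 := cnt_applyMove (c := c) (v := z) (x := y') hzy.1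
        exact ih _ (by omega) (trapped_applyMove htr hzy) _
      | bob =>
        obtain ⟨z, y', hzy⟩ := hmv
        have h1 := cnt_applyMove (c := c) (v := z) (x := y') hzy.1
        exact BobWins.bobMove c z y' hzy (ih _ (by omega) (trapped_applyMove htr hzy) _)
    · push_neg at hmv
      exact BobWins.endPos p c hmv ⟨htr.choose, htr.choose_spec.1⟩

/-- budget condition at a vertex. -/
def Budget (G : SimpleGraph V) [DecidableRel G.Adj] (c : V → Option (Fin 4)) (w : V) : Prop :=
  2 * (4 - (PhiF G c w).card) ≤ (ULF G c w).card

def Dist4 (p q r s : Fin 4) : Prop := p ≠ q ∧ p ≠ r ∧ p ≠ s ∧ q ≠ r ∧ q ≠ s ∧ r ≠ s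

def EndCond (G : SimpleGraph V) [DecidableRel G.Adj] (c : V → Option (Fin 4)) (l : List V)
    (p q r s : Fin 4) : Prop :=
  ∀ z ∈ l.getLast?, (Even l.length → p ∈ PhiF G c z ∧ q ∈ PhiF G c z) ∧
    (Odd l.length → r ∈ PhiF G c z ∧ s ∈ PhiF G c z)

def Inv (G : SimpleGraph V) [DecidableRel G.Adj] (c : V → Option (Fin 4)) (l : List V)
    (p q r s : Fin 4) : Prop :=
  l ≠ [] ∧ l.Chain' G.Adj ∧ l.Nodup ∧ Dist4 p q r s ∧
    (∀ w ∈ l, c w = none ∧ 2 ≤ G.degree w) ∧ (∀ w ∈ l, Budget G c w) ∧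
    (∀ z ∈ l.head?, p ∈ PhiF G c z ∧ q ∈ PhiF G c z) ∧ EndCond G c l p q r s

def WeakInv (G : SimpleGraph V) [DecidableRel G.Adj] (c : V → Option (Fin 4)) (l : List V)
    (p q r s : Fin 4) : Prop :=
  l ≠ [] ∧ l.Chain' G.Adj ∧ l.Nodup ∧ Dist4 p q r s ∧
    (∀ w ∈ l, c w = none ∧ 2 ≤ G.degree w) ∧
    (∀ z ∈ l.head?, p ∈ PhiF G c z) ∧ EndCond G c l p q r s ∧
    ∃ m ∈ l, (2 * (4 - (PhiF G c m).card) ≤ (ULF G c m).card + 1) ∧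
      (∀ w ∈ l, w ≠ m → Budget G c w) ∧
      ((∀ z ∈ l.head?, q ∈ PhiF G c z) ∨ l.head? = some m)

lemma endCond_mono {c : V → Option (Fin 4)} {v x l p q r s} (hv : c v = none)
    (h : EndCond G c l p q r s) : EndCond G (applyMove c v x) l p q r s := by
  intro z hz
  obtain ⟨h1, h2⟩ := h z hz
  exact ⟨fun he => ⟨PhiF_mono hv z (h1 he).1, PhiF_mono hv z (h1 he).2⟩,
    fun ho => ⟨PhiF_mono hv z (h2 ho).1, PhiF_mono hv z (h2 ho).2⟩⟩

end WPL

namespace WPL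
open GCN
variable {V : Type} [Fintype V] [DecidableEq V] {G : SimpleGraph V} [DecidableRel G.Adj]

lemma budget_mono {c : V → Option (Fin 4)} {w u : V} {y : Fin 4} (hunone : c u = none)
    (hnotin : u ∉ ULF G c w) (hb : Budget G c w) : Budget G (applyMove c u y) w := by
  rw [Budget] at hb ⊢
  rw [ULF_applyMove w, Finset.erase_eq_of_notMem hnotin]
  have := Finset.card_le_card (PhiF_mono (G := G) (x := y) hunone w)
  omega

lemma budget_improve {c : V → Option (Fin 4)} {m u : V} {y : Fin 4} (hu : u ∈ ULF G c m)
    (hy : y ∉ PhiF G c m)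
    (hslack : 2 * (4 - (PhiF G c m).card) ≤ (ULF G c m).card + 1) :
    Budget G (applyMove c u y) m := by
  have hunone : c u = none := (mem_ULF.1 hu).2.2
  have hins : insert y (PhiF G c m) ⊆ PhiF G (applyMove c u y) m :=
    Finset.insert_subset (mem_PhiF_applyMove (mem_ULF.1 hu).1) (PhiF_mono hunone m)
  have hcard : (PhiF G c m).card + 1 ≤ (PhiF G (applyMove c u y) m).card := by
    have := Finset.card_le_card hins
    rwa [Finset.card_insert_of_notMem hy] at this
  have hULcard : (ULF G (applyMove c u y) m).card + 1 = (ULF G c m).card := by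
    rw [ULF_applyMove m, Finset.card_erase_of_mem hu]
    have : 0 < (ULF G c m).card := Finset.card_pos.2 ⟨u, hu⟩
    omega
  have h4 := card_PhiF_le_four (G := G) (c := applyMove c u y) (m := m)
  rw [Budget]
  omega

lemma bob_step {N : ℕ}
    (IH : ∀ (c : V → Option (Fin 4)) l p q r s, cnt c ≤ N → Inv G c l p q r s →
      BobWins G .alice c)
    (c : V → Option (Fin 4)) (l : List V) (p q r s : Fin 4)
    (hcnt : cnt c ≤ N + 1) (hW : WeakInv G c l p q r s) : BobWins G .bob c := by
  obtain ⟨hne, hch, hnd, hdist, hbas, hheadp, hend, m, hm, hslack, hbudO, hq⟩ := hW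
  by_cases htr : ∃ w ∈ l, ∀ y : Fin 4, y ∈ PhiF G c w
  · obtain ⟨w, hwl, hall⟩ := htr
    exact trapped_bobWins (cnt c) c le_rfl ⟨w, (hbas w hwl).1, hall⟩ .bob
  · push_neg at htr
    obtain ⟨z, hz⟩ : ∃ z, l.head? = some z := ⟨l.head hne, List.head?_eq_head hne⟩
    have hzmem : z ∈ l.head? := Option.mem_def.2 hz
    have hzl : z ∈ l := List.mem_of_mem_head? hzmem
    -- choose the color y that Bob will play on a leaf of m
    have hkey : ∃ y : Fin 4, y ∉ PhiF G c m ∧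
        (q ∈ PhiF G c z ∨ (z = m ∧ y = q)) := by
      rcases hq with hqmem | hhm
      · obtain ⟨y, hy⟩ := htr m hm
        exact ⟨y, hy, Or.inl (hqmem z hz)⟩
      · have hzm : z = m := by rw [hz] at hhm; exact Option.some_injective _ hhm
        by_cases hqPhi : q ∈ PhiF G c m
        · obtain ⟨y, hy⟩ := htr m hm
          exact ⟨y, hy, Or.inl (hzm ▸ hqPhi)⟩
        · exact ⟨q, hqPhi, Or.inr ⟨hzm, rfl⟩⟩
    obtain ⟨y, hy, hqfin⟩ := hkey
    have hA3 : (PhiF G c m).card ≤ 3 := card_PhiF_le_three hy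
    have hUL1 : 1 ≤ (ULF G c m).card := by omega
    obtain ⟨u, hu⟩ := Finset.card_pos.1 (by omega : 0 < (ULF G c m).card)
    have hmnone : c m = none := (hbas m hm).1
    have hleg : legalMove G c u y := leaf_legal hu hmnone y
    have humem := mem_ULF.1 hu
    have hunone : c u = none := humem.2.2
    refine BobWins.bobMove c u y hleg (IH _ l p q r s ?_ ?_)
    · have := cnt_applyMove (c := c) (v := u) (x := y) hunone
      omega
    -- now prove the full invariant for the position after Bob's move
    have hul : u ∉ l := fun hul => by
      have := (hbas u hul).2
      omega
    have hbas' : ∀ w ∈ l, applyMove c u y w = none ∧ 2 ≤ G.degree w := fun w hw =>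
      ⟨by rw [applyMove_ne (fun h => hul (by rw [← h]; exact hw))]; exact (hbas w hw).1,
        (hbas w hw).2⟩
    have hbud' : ∀ w ∈ l, Budget G (applyMove c u y) w := by
      intro w hw
      by_cases hwm : w = m
      · subst hwm
        exact budget_improve hu hy hslack
      · exact budget_mono hunone (ULF_other hu hwm) (hbudO w hw hwm)
    refine ⟨hne, hch, hnd, hdist, hbas', hbud', ?_, endCond_mono hunone hend⟩
    intro z2 hz2
    rw [Option.mem_def, hz] at hz2
    obtain rfl : z = z2 := by injection hz2
    refine ⟨PhiF_mono hunone z (hheadp z hzmem), ?_⟩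
    rcases hqfin with hq1 | ⟨hzm, rfl⟩
    · exact PhiF_mono hunone z hq1
    · rw [hzm]
      exact mem_PhiF_applyMove humem.1

end WPL
namespace WPL
open GCN
variable {V : Type} [Fintype V] [DecidableEq V] {G : SimpleGraph V} [DecidableRel G.Adj]

/-- After Alice colors `v` with `x`, a neighboring uncolored segment `l` satisfies the weak
invariant (with Bob owing one fixing move at the head of `l`). -/
lemma builder {c : V → Option (Fin 4)} {v : V} {x : Fin 4} {l : List V} {P Q R S : Fin 4}
    (hv : c v = none) (hvdeg : 2 ≤ G.degree v)
    (hne : l ≠ []) (hch : l.Chain' G.Adj) (hnd : l.Nodup) (hvl : v ∉ l)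
    (hbas : ∀ w ∈ l, c w = none ∧ 2 ≤ G.degree w) (hbud : ∀ w ∈ l, Budget G c w)
    (hadj : ∀ z ∈ l.head?, G.Adj v z) (hdist : Dist4 P Q R S) (hx : x = P)
    (hend : EndCond G c l P Q R S) :
    WeakInv G (applyMove c v x) l P Q R S := by
  have hvnotleaf : ∀ w, v ∉ ULF G c w := by
    intro w hmem
    have := (mem_ULF.1 hmem).2.1
    omega
  have hbas' : ∀ w ∈ l, applyMove c v x w = none ∧ 2 ≤ G.degree w := fun w hw =>
    ⟨by rw [applyMove_ne (fun h => hvl (by rw [← h]; exact hw))]; exact (hbas w hw).1,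
      (hbas w hw).2⟩
  have hbud' : ∀ w ∈ l, Budget G (applyMove c v x) w := fun w hw =>
    budget_mono hv (hvnotleaf w) (hbud w hw)
  obtain ⟨z, hz⟩ : ∃ z, l.head? = some z := ⟨l.head hne, List.head?_eq_head hne⟩
  have hzmem : z ∈ l.head? := Option.mem_def.2 hz
  refine ⟨hne, hch, hnd, hdist, hbas', ?_, endCond_mono hv hend, z,
    List.mem_of_mem_head? hzmem, ?_, fun w hw _ => hbud' w hw, Or.inr hz⟩
  · intro z2 hz2
    rw [Option.mem_def, hz] at hz2
    obtain rfl : z = z2 := by injection hz2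
    rw [← hx]
    exact mem_PhiF_applyMove (hadj z hzmem).symm
  · have := hbud' z (List.mem_of_mem_head? hzmem)
    rw [Budget] at this
    omega

end WPL

namespace WPL
open GCN
variable {V : Type} [Fintype V] [DecidableEq V] {G : SimpleGraph V} [DecidableRel G.Adj]

lemma alice_step {N : ℕ}
    (PB : ∀ (c : V → Option (Fin 4)) l p q r s, cnt c ≤ N → WeakInv G c l p q r s →
      BobWins G .bob c)
    (c : V → Option (Fin 4)) (l : List V) (p q r s : Fin 4)
    (hcnt : cnt c ≤ N + 1) (hI : Inv G c l p q r s) : BobWins G .alice c := by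
  obtain ⟨hne, hch, hnd, hdist, hbas, hbud, hhead, hend⟩ := hI
  by_cases htr : ∃ w ∈ l, ∀ y : Fin 4, y ∈ PhiF G c w
  · obtain ⟨w, hwl, hall⟩ := htr
    exact trapped_bobWins (cnt c) c le_rfl ⟨w, (hbas w hwl).1, hall⟩ .alice
  push_neg at htr
  obtain ⟨z, hz⟩ : ∃ z, l.head? = some z := ⟨l.head hne, List.head?_eq_head hne⟩
  have hzmem : z ∈ l.head? := Option.mem_def.2 hz
  have hzl : z ∈ l := List.mem_of_mem_head? hzmem
  have hmoves : ∃ v a, legalMove G c v a := by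
    obtain ⟨y, hy⟩ := htr z hzl
    have h3 := card_PhiF_le_three hy
    have hb := hbud z hzl
    rw [Budget] at hb
    obtain ⟨u, hu⟩ := Finset.card_pos.1 (by omega : 0 < (ULF G c z).card)
    exact ⟨u, y, leaf_legal hu (hbas z hzl).1 y⟩
  refine BobWins.aliceMove c hmoves ?_
  intro v x hvx
  have hv : c v = none := hvx.1
  have hcnt' : cnt (applyMove c v x) ≤ N := by
    have := cnt_applyMove (c := c) (v := v) (x := x) hv
    omega
  have hxPhi : x ∉ PhiF G c v := by
    rw [mem_PhiF]
    rintro ⟨u, hu, hcu⟩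
    exact hvx.2 u hu hcu
  by_cases hvl : v ∈ l
  · -- Alice colored a vertex of the segment
    obtain ⟨l₁, l₂, rfl⟩ := List.append_of_mem hvl
    have hnd' := List.nodup_append.1 hnd
    have hch' := List.isChain_append.1 hch
    have hchl₂ : l₂.Chain' G.Adj := (List.isChain_cons.1 hch'.2.1).2
    have hvhead : ∀ b ∈ l₂.head?, G.Adj v b := (List.isChain_cons.1 hch'.2.1).1
    have hglue : ∀ a₁ ∈ l₁.getLast?, G.Adj a₁ v := fun a₁ ha₁ =>
      hch'.2.2 a₁ ha₁ v (by simp)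
    have hvl₁ : v ∉ l₁ := fun h => hnd'.2.2 v h v List.mem_cons_self rfl
    have hvl₂ : v ∉ l₂ := (List.nodup_cons.1 hnd'.2.1).1
    have hndl₂ : l₂.Nodup := (List.nodup_cons.1 hnd'.2.1).2
    have hndl₁ : l₁.Nodup := hnd'.1
    have hvdeg : 2 ≤ G.degree v := (hbas v hvl).2
    have hlen : (l₁ ++ v :: l₂).length = l₁.length + l₂.length + 1 := by
      rw [List.length_append, List.length_cons]
      omega
    have hmem₂ : ∀ w ∈ l₂, w ∈ l₁ ++ v :: l₂ := fun w hw => by simp [hw]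
    have hmem₁ : ∀ w ∈ l₁, w ∈ l₁ ++ v :: l₂ := fun w hw => by simp [hw]
    have hlast₂ : ∀ (_ : l₂ ≠ []), (l₁ ++ v :: l₂).getLast? = l₂.getLast? := by
      intro h
      rw [show l₁ ++ v :: l₂ = (l₁ ++ [v]) ++ l₂ by simp, List.getLast?_append_of_ne_nil _ h]
    have hhead₁ : ∀ (_ : l₁ ≠ []), (l₁ ++ v :: l₂).head? = l₁.head? := by
      intro h
      cases l₁ with
      | nil => exact absurd rfl h
      | cons a t => rfl
    have suffixCase : ∀ P' Q' R' S', Dist4 P' Q' R' S' → x = P' → l₂ ≠ [] →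
        EndCond G c l₂ P' Q' R' S' → BobWins G .bob (applyMove c v x) := by
      intro P' Q' R' S' hd hxP hl2 hendn
      exact PB _ l₂ P' Q' R' S' hcnt'
        (builder hv hvdeg hl2 hchl₂ hndl₂ hvl₂ (fun w hw => hbas w (hmem₂ w hw))
          (fun w hw => hbud w (hmem₂ w hw)) hvhead hd hxP hendn)
    have prefixCase : ∀ P' Q' R' S', Dist4 P' Q' R' S' → x = P' → l₁ ≠ [] →
        EndCond G c l₁.reverse P' Q' R' S' → BobWins G .bob (applyMove c v x) := by
      intro P' Q' R' S' hd hxP hl1 hendn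
      refine PB _ l₁.reverse P' Q' R' S' hcnt'
        (builder hv hvdeg (by simpa using hl1) ?_ (List.nodup_reverse.2 hndl₁)
          (by simpa using hvl₁) (fun w hw => hbas w (hmem₁ w (List.mem_reverse.1 hw)))
          (fun w hw => hbud w (hmem₁ w (List.mem_reverse.1 hw))) ?_ hd hxP hendn)
      · refine List.isChain_reverse.2 ?_
        exact hch'.1.imp fun a₁ b₁ h => h.symm
      · intro z2 hz2
        rw [List.head?_reverse] at hz2
        exact (hglue z2 hz2).symm
    obtain ⟨hpq, hpr, hps, hqr, hqs, hrs⟩ := id hdist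
    rcases fin4_cases hpq hpr hps hqr hqs hrs x with hxp | hxp | hxp | hxp
    · -- x = p
      rw [hxp] at hxPhi
      have hl1 : l₁ ≠ [] := by
        rintro rfl
        exact hxPhi (hhead v (by simp)).1
      rcases Nat.even_or_odd l₁.length with he1 | ho1
      · refine prefixCase p q r s hdist hxp hl1 ?_
        intro z2 hz2
        rw [List.getLast?_reverse] at hz2
        have hh := hhead z2 (by rw [Option.mem_def, hhead₁ hl1]; exact hz2)
        refine ⟨fun _ => hh, fun hodd => ?_⟩
        rw [List.length_reverse, Nat.odd_iff] at hodd
        rw [Nat.even_iff] at he1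
        omega
      · have hl2 : l₂ ≠ [] := by
          rintro rfl
          have hvlast : v ∈ (l₁ ++ v :: ([] : List V)).getLast? := by
            rw [Option.mem_def, show l₁ ++ v :: ([] : List V) = l₁ ++ [v] from rfl,
              List.getLast?_concat]
          have heven : Even (l₁ ++ v :: ([] : List V)).length := by
            rw [hlen, List.length_nil, Nat.even_iff]
            rw [Nat.odd_iff] at ho1
            omega
          exact hxPhi ((hend v hvlast).1 heven).1
        refine suffixCase p q r s hdist hxp hl2 ?_
        intro z2 hz2
        have hcond := hend z2 (by rw [Option.mem_def, hlast₂ hl2]; exact hz2)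
        rw [Nat.odd_iff] at ho1
        constructor
        · intro he2
          refine hcond.1 ?_
          rw [hlen, Nat.even_iff]
          rw [Nat.even_iff] at he2
          omega
        · intro ho2
          refine hcond.2 ?_
          rw [hlen, Nat.odd_iff]
          rw [Nat.odd_iff] at ho2
          omega
    · -- x = q
      rw [hxp] at hxPhi
      have hdist' : Dist4 q p r s := ⟨hpq.symm, hqr, hqs, hpr, hps, hrs⟩
      have hl1 : l₁ ≠ [] := by
        rintro rfl
        exact hxPhi (hhead v (by simp)).2
      rcases Nat.even_or_odd l₁.length with he1 | ho1
      · refine prefixCase q p r s hdist' hxp hl1 ?_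
        intro z2 hz2
        rw [List.getLast?_reverse] at hz2
        have hh := hhead z2 (by rw [Option.mem_def, hhead₁ hl1]; exact hz2)
        refine ⟨fun _ => ⟨hh.2, hh.1⟩, fun hodd => ?_⟩
        rw [List.length_reverse, Nat.odd_iff] at hodd
        rw [Nat.even_iff] at he1
        omega
      · have hl2 : l₂ ≠ [] := by
          rintro rfl
          have hvlast : v ∈ (l₁ ++ v :: ([] : List V)).getLast? := by
            rw [Option.mem_def, show l₁ ++ v :: ([] : List V) = l₁ ++ [v] from rfl,
              List.getLast?_concat]
          have heven : Even (l₁ ++ v :: ([] : List V)).length := by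
            rw [hlen, List.length_nil, Nat.even_iff]
            rw [Nat.odd_iff] at ho1
            omega
          exact hxPhi ((hend v hvlast).1 heven).2
        refine suffixCase q p r s hdist' hxp hl2 ?_
        intro z2 hz2
        have hcond := hend z2 (by rw [Option.mem_def, hlast₂ hl2]; exact hz2)
        rw [Nat.odd_iff] at ho1
        constructor
        · intro he2
          have := hcond.1 (by rw [hlen, Nat.even_iff]; rw [Nat.even_iff] at he2; omega)
          exact ⟨this.2, this.1⟩
        · intro ho2
          exact hcond.2 (by rw [hlen, Nat.odd_iff]; rw [Nat.odd_iff] at ho2; omega)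
    · -- x = r
      rw [hxp] at hxPhi
      have hdist' : Dist4 r s p q := ⟨hrs, hpr.symm, hqr.symm, hps.symm, hqs.symm, hpq⟩
      rcases Nat.even_or_odd l₁.length with he1 | ho1
      · have hl2 : l₂ ≠ [] := by
          rintro rfl
          have hvlast : v ∈ (l₁ ++ v :: ([] : List V)).getLast? := by
            rw [Option.mem_def, show l₁ ++ v :: ([] : List V) = l₁ ++ [v] from rfl,
              List.getLast?_concat]
          have hodd : Odd (l₁ ++ v :: ([] : List V)).length := by
            rw [hlen, List.length_nil, Nat.odd_iff]
            rw [Nat.even_iff] at he1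
            omega
          exact hxPhi ((hend v hvlast).2 hodd).1
        refine suffixCase r s p q hdist' hxp hl2 ?_
        intro z2 hz2
        have hcond := hend z2 (by rw [Option.mem_def, hlast₂ hl2]; exact hz2)
        rw [Nat.even_iff] at he1
        constructor
        · intro he2
          refine hcond.2 ?_
          rw [hlen, Nat.odd_iff]
          rw [Nat.even_iff] at he2
          omega
        · intro ho2
          refine hcond.1 ?_
          rw [hlen, Nat.even_iff]
          rw [Nat.odd_iff] at ho2
          omega
      · have hl1 : l₁ ≠ [] := by
          rintro rfl
          rw [List.length_nil, Nat.odd_iff] at ho1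
          omega
        refine prefixCase r s p q hdist' hxp hl1 ?_
        intro z2 hz2
        rw [List.getLast?_reverse] at hz2
        have hh := hhead z2 (by rw [Option.mem_def, hhead₁ hl1]; exact hz2)
        refine ⟨fun heven => ?_, fun _ => hh⟩
        rw [List.length_reverse, Nat.even_iff] at heven
        rw [Nat.odd_iff] at ho1
        omega
    · -- x = s
      rw [hxp] at hxPhi
      have hdist' : Dist4 s r p q := ⟨hrs.symm, hps.symm, hqs.symm, hpr.symm, hqr.symm, hpq⟩
      rcases Nat.even_or_odd l₁.length with he1 | ho1
      · have hl2 : l₂ ≠ [] := by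
          rintro rfl
          have hvlast : v ∈ (l₁ ++ v :: ([] : List V)).getLast? := by
            rw [Option.mem_def, show l₁ ++ v :: ([] : List V) = l₁ ++ [v] from rfl,
              List.getLast?_concat]
          have hodd : Odd (l₁ ++ v :: ([] : List V)).length := by
            rw [hlen, List.length_nil, Nat.odd_iff]
            rw [Nat.even_iff] at he1
            omega
          exact hxPhi ((hend v hvlast).2 hodd).2
        refine suffixCase s r p q hdist' hxp hl2 ?_
        intro z2 hz2
        have hcond := hend z2 (by rw [Option.mem_def, hlast₂ hl2]; exact hz2)
        rw [Nat.even_iff] at he1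
        constructor
        · intro he2
          have := hcond.2 (by rw [hlen, Nat.odd_iff]; rw [Nat.even_iff] at he2; omega)
          exact ⟨this.2, this.1⟩
        · intro ho2
          exact hcond.1 (by rw [hlen, Nat.even_iff]; rw [Nat.odd_iff] at ho2; omega)
      · have hl1 : l₁ ≠ [] := by
          rintro rfl
          rw [List.length_nil, Nat.odd_iff] at ho1
          omega
        refine prefixCase s r p q hdist' hxp hl1 ?_
        intro z2 hz2
        rw [List.getLast?_reverse] at hz2
        have hh := hhead z2 (by rw [Option.mem_def, hhead₁ hl1]; exact hz2)
        refine ⟨fun heven => ?_, fun _ => hh⟩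
        rw [List.length_reverse, Nat.even_iff] at heven
        rw [Nat.odd_iff] at ho1
        omega
  · -- Alice colored a vertex outside the segment
    have hbas' : ∀ w ∈ l, applyMove c v x w = none ∧ 2 ≤ G.degree w := fun w hw =>
      ⟨by rw [applyMove_ne (fun h => hvl (by rw [← h]; exact hw))]; exact (hbas w hw).1,
        (hbas w hw).2⟩
    by_cases hlf : ∃ w ∈ l, v ∈ ULF G c w
    · obtain ⟨w, hwl, hvw⟩ := hlf
      refine PB _ l p q r s hcnt' ⟨hne, hch, hnd, hdist,
        hbas', fun z2 hz2 => PhiF_mono hv z2 (hhead z2 hz2).1, endCond_mono hv hend,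
        w, hwl, ?_, ?_, Or.inl fun z2 hz2 => PhiF_mono hv z2 (hhead z2 hz2).2⟩
      · have hb := hbud w hwl
        rw [Budget] at hb
        have hULcard : (ULF G (applyMove c v x) w).card + 1 = (ULF G c w).card := by
          rw [ULF_applyMove w, Finset.card_erase_of_mem hvw]
          have : 0 < (ULF G c w).card := Finset.card_pos.2 ⟨v, hvw⟩
          omega
        have := Finset.card_le_card (PhiF_mono (G := G) (x := x) hv w)
        omega
      · exact fun w' hw' hne' => budget_mono hv (ULF_other hvw hne') (hbud w' hw')
    · push_neg at hlf
      refine PB _ l p q r s hcnt' ⟨hne, hch, hnd, hdist,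
        hbas', fun z2 hz2 => PhiF_mono hv z2 (hhead z2 hz2).1, endCond_mono hv hend,
        z, hzl, ?_, fun w' hw' _ => budget_mono hv (hlf w' hw') (hbud w' hw'),
        Or.inl fun z2 hz2 => PhiF_mono hv z2 (hhead z2 hz2).2⟩
      have := budget_mono (y := x) hv (hlf z hzl) (hbud z hzl)
      rw [Budget] at this
      omega

end WPL

namespace WPL
open GCN
variable {V : Type} [Fintype V] [DecidableEq V] {G : SimpleGraph V} [DecidableRel G.Adj]

lemma inv_bobWins : ∀ N (c : V → Option (Fin 4)) (l : List V) (p q r s : Fin 4),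
    cnt c ≤ N → Inv G c l p q r s → BobWins G .alice c := by
  intro N
  induction N with
  | zero =>
    intro c l p q r s hc hI
    obtain ⟨hne, _, _, _, hbas, _⟩ := hI
    exfalso
    have h1 : l.head hne ∈ Finset.univ.filter fun u => c u = none := by
      simp [(hbas _ (List.head_mem hne)).1]
    have := Finset.card_pos.2 ⟨_, h1⟩
    rw [cnt] at hc
    omega
  | succ N ih =>
    have PB : ∀ (c : V → Option (Fin 4)) l p q r s, cnt c ≤ N → WeakInv G c l p q r s →
        BobWins G .bob c := fun c l p q r s hc hW =>
      bob_step (N := N - 1)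
        (fun c' l' p' q' r' s' hc' hI' => ih c' l' p' q' r' s' (by omega) hI') c l p q r s (by omega) hW
    exact fun c l p q r s hc hI => alice_step PB c l p q r s hc hI

end WPL


open GCN WPL in
theorem WPL.statement3_aux {V : Type} [Fintype V] [DecidableEq V]
    (G : SimpleGraph V) [DecidableRel G.Adj]
    (c : V → Option (Fin 4))
    {v₀ vd : V} (P : G.Walk v₀ vd) (hP : P.IsPath)
    (huncol : ∀ v ∈ P.support, c v = none)
    (hdeg : ∀ v ∈ P.support, 2 ≤ G.degree v)
    (hleaves : ∀ v ∈ P.support,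
      8 ≤ {u : V | G.Adj v u ∧ G.degree u = 1 ∧ c u = none}.ncard)
    (a b : Fin 4) (hab : a ≠ b) (h₀ : {a, b} ⊆ Phi G c v₀)
    (hcond : (Odd P.length ∧ {a, b} ⊆ Phi G c vd) ∨
             (Even P.length ∧ ({a, b}ᶜ : Set (Fin 4)) ⊆ Phi G c vd)) :
    BobWins G .alice c := by
  classical
  -- extract the other two colors r, s
  have hcard2 : (Finset.univ \ {a, b} : Finset (Fin 4)).card = 2 := by
    rw [Finset.card_sdiff_of_subset (Finset.subset_univ _), Finset.card_univ, Fintype.card_fin,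
      Finset.card_insert_of_notMem (by simp [hab]), Finset.card_singleton]
  obtain ⟨r, s, hrs, hset⟩ := Finset.card_eq_two.1 hcard2
  have hr : r ∈ Finset.univ \ ({a, b} : Finset (Fin 4)) := by rw [hset]; simp
  have hs : s ∈ Finset.univ \ ({a, b} : Finset (Fin 4)) := by rw [hset]; simp
  rw [Finset.mem_sdiff, Finset.mem_insert, Finset.mem_singleton] at hr hs
  push_neg at hr hs
  have hdist : Dist4 a b r s :=
    ⟨hab, fun h => hr.2.1 h.symm, fun h => hs.2.1 h.symm,
      fun h => hr.2.2 h.symm, fun h => hs.2.2 h.symm, hrs⟩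
  -- list facts about the support
  set l := P.support with hl
  have hne : l ≠ [] := P.support_ne_nil
  have hhd : l.head? = some v₀ := by
    rw [List.head?_eq_head hne, P.head_support]
  have hlast : l.getLast? = some vd := by
    rw [List.getLast?_eq_getLast hne, P.getLast_support]
  have hlen : l.length = P.length + 1 := P.length_support
  refine inv_bobWins (cnt c) c l a b r s le_rfl
    ⟨hne, P.isChain_adj_support, hP.support_nodup, hdist, fun w hw => ⟨huncol w hw, hdeg w hw⟩,
      ?_, ?_, ?_⟩
  · -- budgets
    intro w hw
    have h8 : 8 ≤ (ULF G c w).card := by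
      have := hleaves w hw
      rwa [Set.ncard_eq_toFinset_card', Set.toFinset_setOf] at this
    rw [Budget]
    omega
  · -- head condition
    intro z hz
    rw [Option.mem_def, hhd] at hz
    obtain rfl : v₀ = z := by injection hz
    exact ⟨mem_PhiF_iff_Phi.2 (h₀ (by simp)), mem_PhiF_iff_Phi.2 (h₀ (by simp))⟩
  · -- end condition
    intro z hz
    rw [Option.mem_def, hlast] at hz
    obtain rfl : vd = z := by injection hz
    rcases hcond with ⟨hodd, hsub⟩ | ⟨heven, hsub⟩
    · rw [Nat.odd_iff] at hodd
      constructor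
      · intro _
        exact ⟨mem_PhiF_iff_Phi.2 (hsub (by simp)), mem_PhiF_iff_Phi.2 (hsub (by simp))⟩
      · intro hol
        rw [hlen, Nat.odd_iff] at hol
        omega
    · rw [Nat.even_iff] at heven
      constructor
      · intro hel
        rw [hlen, Nat.even_iff] at hel
        omega
      · intro _
        refine ⟨mem_PhiF_iff_Phi.2 (hsub ?_), mem_PhiF_iff_Phi.2 (hsub ?_)⟩
        · simp [hr.2.1, hr.2.2]
        · simp [hs.2.1, hs.2.2]

open GCN in
/-- Winning path lemma.  With 4 colors (`Fin 4`), suppose the position `c` is a partial proper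
coloring, Alice to move, and `G` contains a path `P` from `v₀` to `v_d` all of whose vertices
are uncolored, have degree at least 2 and have at least 8 uncolored pendant neighbors.  If
`{a, b} ⊆ Φ(v₀)` for distinct colors `a, b`, and either the length `d` of `P` is odd and
`{a, b} ⊆ Φ(v_d)`, or `d` is even and the two colors other than `a, b` are in `Φ(v_d)`, then
Bob wins. -/
theorem statement3 {V : Type} [Fintype V] [DecidableEq V]
    (G : SimpleGraph V) [DecidableRel G.Adj]
    (c : V → Option (Fin 4)) (hc : ProperPartial G c)
    {v₀ vd : V} (P : G.Walk v₀ vd) (hP : P.IsPath)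
    (huncol : ∀ v ∈ P.support, c v = none)
    (hdeg : ∀ v ∈ P.support, 2 ≤ G.degree v)
    (hleaves : ∀ v ∈ P.support,
      8 ≤ {u : V | G.Adj v u ∧ G.degree u = 1 ∧ c u = none}.ncard)
    (a b : Fin 4) (hab : a ≠ b) (h₀ : {a, b} ⊆ Phi G c v₀)
    (hcond : (Odd P.length ∧ {a, b} ⊆ Phi G c vd) ∨
             (Even P.length ∧ ({a, b}ᶜ : Set (Fin 4)) ⊆ Phi G c vd)) :
    BobWins G .alice c := by
  exact WPL.statement3_aux G c P hP huncol hdeg hleaves a b hab h₀ hcond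
end

section
/- Let G be a finite simple graph, let C = {1,2,3,4} be a set of 4 colors, and consider a position (a partial proper coloring of G with colors from C) with Alice to move. Suppose G contains an edge uv with both u and v uncolored, where u and v each have degree at least 2 and each have at least 8 uncolored pendant neighbors, and suppose |Φ(u) ∩ Φ(v)| ≥ 2. Then the position is winning for Bob. -/
section Helpers
open GCN
variable {V : Type} [Fintype V] [DecidableEq V]

private lemma GCN.ne_of_vals {α : Type} {c : V → Option α} {z y : V} {g : α}
    (h1 : c z = some g) (h2 : c y = none) : z ≠ y := by
  rintro rfl; rw [h1] at h2; exact Option.some_ne_none _ h2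

/-- vertex `w` is uncolored but all colors appear on its neighbors. -/
private def GCN.Blocked (G : SimpleGraph V) (c : V → Option (Fin 4)) (w : V) : Prop :=
  c w = none ∧ ∀ g : Fin 4, ∃ x, G.Adj w x ∧ c x = some g

private lemma GCN.blocked_no_legal {G : SimpleGraph V} {c w} (hb : GCN.Blocked G c w)
    (a : Fin 4) : ¬ legalMove G c w a := by
  rintro ⟨-, h2⟩
  obtain ⟨x, hadj, hx⟩ := hb.2 a
  exact h2 x hadj hx

private lemma GCN.blocked_update {G : SimpleGraph V} {c w} (hb : GCN.Blocked G c w) {x : V}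
    {a : Fin 4} (hleg : legalMove G c x a) : GCN.Blocked G (applyMove c x a) w := by
  have hxw : x ≠ w := by rintro rfl; exact GCN.blocked_no_legal hb a hleg
  constructor
  · simp [applyMove, Function.update_apply, hxw.symm, hb.1]
  · intro g
    obtain ⟨z, hadj, hz⟩ := hb.2 g
    have hzx : z ≠ x := GCN.ne_of_vals hz hleg.1
    exact ⟨z, hadj, by simp [applyMove, Function.update_apply, hzx, hz]⟩

private lemma GCN.filter_applyMove {G : SimpleGraph V} {c : V → Option (Fin 4)} {x : V}
    {a : Fin 4} (hx : c x = none) :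
    (Finset.univ.filter fun z => applyMove c x a z = none)
      = (Finset.univ.filter fun z => c z = none).erase x := by
  ext z
  by_cases hz : z = x <;> simp [applyMove, Function.update_apply, hz, hx]

private lemma GCN.blocked_wins_aux (G : SimpleGraph V) :
    ∀ n (c : V → Option (Fin 4)) (p : Player) (w : V),
      (Finset.univ.filter fun z => c z = none).card ≤ n → GCN.Blocked G c w →
      BobWins G p c := by
  intro n
  induction n with
  | zero =>
    intro c p w hcard hb
    exfalso
    have hmem : w ∈ Finset.univ.filter fun z => c z = none := by simp [hb.1]
    have := Finset.card_pos.mpr ⟨w, hmem⟩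
    omega
  | succ n ih =>
    intro c p w hcard hb
    have hstep : ∀ (x : V) (a : Fin 4), legalMove G c x a →
        ∀ q, BobWins G q (applyMove c x a) := by
      intro x a hleg q
      refine ih _ _ w ?_ (GCN.blocked_update hb hleg)
      rw [GCN.filter_applyMove (G := G) hleg.1,
        Finset.card_erase_of_mem (by simp [hleg.1])]
      omega
    by_cases h : ∃ x a, legalMove G c x a
    · cases p with
      | alice => exact .aliceMove c h (fun x a hleg => hstep x a hleg _)
      | bob =>
        obtain ⟨x, a, hleg⟩ := h
        exact .bobMove c x a hleg (hstep x a hleg _)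
    · push_neg at h
      exact .endPos p c h ⟨w, hb.1⟩

private lemma GCN.blocked_wins {G : SimpleGraph V} {c : V → Option (Fin 4)} {w : V}
    (p : Player) (hb : GCN.Blocked G c w) : BobWins G p c :=
  GCN.blocked_wins_aux G _ c p w le_rfl hb

private lemma GCN.pendant_adj {G : SimpleGraph V} [DecidableRel G.Adj] {u w : V}
    (hd : G.degree w = 1) (hadj : G.Adj u w) : ∀ z, G.Adj w z → z = u := by
  intro z hz
  have h1 : z ∈ G.neighborFinset w := by simpa using hz
  have h2 : u ∈ G.neighborFinset w := by simpa using hadj.symm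
  exact Finset.card_le_one.mp (le_of_eq hd) z h1 u h2

private lemma GCN.pick_pendant {P : Set V} (h : 8 ≤ P.ncard) (s1 s2 s3 : V) :
    ∃ w, w ∈ P ∧ w ≠ s1 ∧ w ≠ s2 ∧ w ≠ s3 := by
  by_contra hcon
  push_neg at hcon
  have hsub : P ⊆ {s1, s2, s3} := by
    intro w hw
    have := hcon w hw
    simp only [Set.mem_insert_iff, Set.mem_singleton_iff]
    tauto
  have h1 := Set.ncard_le_ncard hsub (Set.toFinite _)
  have h2 : ({s1, s2, s3} : Set V).ncard ≤ 3 := by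
    calc ({s1, s2, s3} : Set V).ncard ≤ ({s2, s3} : Set V).ncard + 1 := Set.ncard_insert_le _ _
      _ ≤ (({s3} : Set V).ncard + 1) + 1 := by gcongr; exact Set.ncard_insert_le _ _
      _ ≤ 3 := by simp [Set.ncard_singleton]
  omega

private lemma GCN.exists_fourth : ∀ (a b c : Fin 4), a ≠ b → c ≠ a → c ≠ b →
    ∃ d, ∀ g : Fin 4, g = a ∨ g = b ∨ g = c ∨ g = d := by decide

private lemma GCN.exists_ef : ∀ a b : Fin 4, a ≠ b → ∃ e f : Fin 4, e ≠ f ∧ e ≠ a ∧ e ≠ b ∧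
    f ≠ a ∧ f ≠ b ∧ (∀ g : Fin 4, g = a ∨ g = b ∨ g = e ∨ g = f) := by decide

/-- If `t` is uncolored, three colors `g1 g2 g3` appear on its neighbors, `w` is an uncolored
pendant neighbor of `t`, and `g1,g2,g3,g4` exhaust all four colors, then Bob (to move) can color
`w` with `g4`, blocking `t` forever; hence Bob wins. -/
private lemma GCN.kill {G : SimpleGraph V} [DecidableRel G.Adj] {c' : V → Option (Fin 4)}
    {t w : V} (hadj : G.Adj t w) (hdw : G.degree w = 1) (ht : c' t = none) (hw : c' w = none)
    {g1 g2 g3 g4 : Fin 4} (hcov : ∀ g : Fin 4, g = g1 ∨ g = g2 ∨ g = g3 ∨ g = g4)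
    (h1 : ∃ z, G.Adj t z ∧ c' z = some g1)
    (h2 : ∃ z, G.Adj t z ∧ c' z = some g2)
    (h3 : ∃ z, G.Adj t z ∧ c' z = some g3) :
    BobWins G .bob c' := by
  have htw : t ≠ w := G.ne_of_adj hadj
  have hleg : legalMove G c' w g4 :=
    ⟨hw, fun z hz => by rw [GCN.pendant_adj hdw hadj z hz, ht]; simp⟩
  refine BobWins.bobMove c' w g4 hleg (GCN.blocked_wins (w := t) _ ?_)
  constructor
  · simp [applyMove, Function.update_apply, htw, ht]
  · intro g
    have hwit : ∀ gi : Fin 4, (∃ z, G.Adj t z ∧ c' z = some gi) →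
        ∃ z, G.Adj t z ∧ applyMove c' w g4 z = some gi := by
      rintro gi ⟨z, hz, hcz⟩
      have hzw : z ≠ w := GCN.ne_of_vals hcz hw
      exact ⟨z, hz, by simp [applyMove, Function.update_apply, hzw, hcz]⟩
    rcases hcov g with rfl | rfl | rfl | rfl
    · exact hwit _ h1
    · exact hwit _ h2
    · exact hwit _ h3
    · exact ⟨w, hadj, by simp [applyMove]⟩

end Helpers



open GCN in
/-- With 4 colors (`Fin 4`), suppose the position `c` is a partial proper coloring, Alice to
move, and `G` contains an edge `uv` with `u, v` uncolored, both of degree at least 2 and both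
with at least 8 uncolored pendant neighbors.  If `|Φ(u) ∩ Φ(v)| ≥ 2`, then Bob wins. -/
theorem statement4 {V : Type} [Fintype V] [DecidableEq V]
    (G : SimpleGraph V) [DecidableRel G.Adj]
    (c : V → Option (Fin 4)) (hc : ProperPartial G c)
    (u v : V) (huv : G.Adj u v)
    (hu : c u = none) (hv : c v = none)
    (hdegu : 2 ≤ G.degree u) (hdegv : 2 ≤ G.degree v)
    (hleavesu : 8 ≤ {w : V | G.Adj u w ∧ G.degree w = 1 ∧ c w = none}.ncard)
    (hleavesv : 8 ≤ {w : V | G.Adj v w ∧ G.degree w = 1 ∧ c w = none}.ncard)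
    (hPhi : 2 ≤ (Phi G c u ∩ Phi G c v).ncard) :
    BobWins G .alice c := by
  classical
  have huvne : u ≠ v := G.ne_of_adj huv
  -- two common colors a, b with witness neighbors
  obtain ⟨a, b, ha, hb, hab⟩ := (Set.one_lt_ncard_iff (Set.toFinite _)).mp
    (by omega : 1 < (Phi G c u ∩ Phi G c v).ncard)
  obtain ⟨zau, hzau, hczau⟩ := ha.1
  obtain ⟨zav, hzav, hczav⟩ := ha.2
  obtain ⟨zbu, hzbu, hczbu⟩ := hb.1
  obtain ⟨zbv, hzbv, hczbv⟩ := hb.2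
  obtain ⟨e, f, hef, hea, heb, hfa, hfb, hcov⟩ := GCN.exists_ef a b hab
  -- there is a legal move: color a pendant of u
  obtain ⟨w0, ⟨hw0adj, hw0deg, hw0c⟩, -, -, -⟩ := GCN.pick_pendant hleavesu u u u
  have hmoves : ∃ x g, legalMove G c x g :=
    ⟨w0, e, hw0c, fun z hz => by rw [GCN.pendant_adj hw0deg hw0adj z hz, hu]; simp⟩
  refine BobWins.aliceMove c hmoves ?_
  intro x col hx
  have hcx : c x = none := hx.1
  by_cases hxu : x = u
  · -- Alice colored u : Bob blocks v
    subst hxu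
    have hcola : col ≠ a := by rintro rfl; exact hx.2 zau hzau hczau
    have hcolb : col ≠ b := by rintro rfl; exact hx.2 zbu hzbu hczbu
    obtain ⟨d, hd⟩ := GCN.exists_fourth a b col hab hcola hcolb
    obtain ⟨w1, ⟨h1adj, h1deg, h1c⟩, h1x, -, -⟩ := GCN.pick_pendant hleavesv x x x
    have hvx : v ≠ x := huvne.symm
    have hzavx : zav ≠ x := GCN.ne_of_vals hczav hcx
    have hzbvx : zbv ≠ x := GCN.ne_of_vals hczbv hcx
    refine GCN.kill h1adj h1deg ?_ ?_ hd ⟨zav, hzav, ?_⟩ ⟨zbv, hzbv, ?_⟩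
      ⟨x, huv.symm, ?_⟩ <;>
      simp [applyMove, Function.update_apply, hvx, h1x, hzavx, hzbvx, hv, h1c, hczav, hczbv]
  · by_cases hxv : x = v
    · -- Alice colored v : Bob blocks u
      subst hxv
      have hcola : col ≠ a := by rintro rfl; exact hx.2 zav hzav hczav
      have hcolb : col ≠ b := by rintro rfl; exact hx.2 zbv hzbv hczbv
      obtain ⟨d, hd⟩ := GCN.exists_fourth a b col hab hcola hcolb
      obtain ⟨w1, ⟨h1adj, h1deg, h1c⟩, h1x, -, -⟩ := GCN.pick_pendant hleavesu x x x
      have hux : u ≠ x := huvne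
      have hzaux : zau ≠ x := GCN.ne_of_vals hczau hcx
      have hzbux : zbu ≠ x := GCN.ne_of_vals hczbu hcx
      refine GCN.kill h1adj h1deg ?_ ?_ hd ⟨zau, hzau, ?_⟩ ⟨zbu, hzbu, ?_⟩
        ⟨x, huv, ?_⟩ <;>
        simp [applyMove, Function.update_apply, hux, h1x, hzaux, hzbux, hu, h1c, hczau, hczbu]
    · -- Alice colored some other vertex x : Bob colors a pendant of u with e
      obtain ⟨w1, ⟨h1adj, h1deg, h1c⟩, h1x, -, -⟩ := GCN.pick_pendant hleavesu x x x
      have hux : u ≠ x := fun h => hxu h.symm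
      have hvx : v ≠ x := fun h => hxv h.symm
      have huw1 : u ≠ w1 := G.ne_of_adj h1adj
      have hvw1 : v ≠ w1 := by rintro rfl; rw [h1deg] at hdegv; omega
      have hc1u : applyMove c x col u = none := by
        simp [applyMove, Function.update_apply, hux, hu]
      have hlegB : legalMove G (applyMove c x col) w1 e :=
        ⟨by simp [applyMove, Function.update_apply, h1x, h1c],
         fun z hz => by rw [GCN.pendant_adj h1deg h1adj z hz, hc1u]; simp⟩
      refine BobWins.bobMove _ w1 e hlegB ?_
      -- facts about c2
      have hzaux : zau ≠ x := GCN.ne_of_vals hczau hcx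
      have hzbux : zbu ≠ x := GCN.ne_of_vals hczbu hcx
      have hzavx : zav ≠ x := GCN.ne_of_vals hczav hcx
      have hzbvx : zbv ≠ x := GCN.ne_of_vals hczbv hcx
      have hzauw1 : zau ≠ w1 := GCN.ne_of_vals hczau h1c
      have hzbuw1 : zbu ≠ w1 := GCN.ne_of_vals hczbu h1c
      have hzavw1 : zav ≠ w1 := GCN.ne_of_vals hczav h1c
      have hzbvw1 : zbv ≠ w1 := GCN.ne_of_vals hczbv h1c
      have hc2u : applyMove (applyMove c x col) w1 e u = none := by
        simp [applyMove, Function.update_apply, hux, huw1, hu]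
      have hc2v : applyMove (applyMove c x col) w1 e v = none := by
        simp [applyMove, Function.update_apply, hvx, hvw1, hv]
      have hc2w1 : applyMove (applyMove c x col) w1 e w1 = some e := by
        simp [applyMove, Function.update_apply]
      have hc2zau : applyMove (applyMove c x col) w1 e zau = some a := by
        simp [applyMove, Function.update_apply, hzaux, hzauw1, hczau]
      have hc2zbu : applyMove (applyMove c x col) w1 e zbu = some b := by
        simp [applyMove, Function.update_apply, hzbux, hzbuw1, hczbu]
      have hc2zav : applyMove (applyMove c x col) w1 e zav = some a := by
        simp [applyMove, Function.update_apply, hzavx, hzavw1, hczav]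
      have hc2zbv : applyMove (applyMove c x col) w1 e zbv = some b := by
        simp [applyMove, Function.update_apply, hzbvx, hzbvw1, hczbv]
      by_cases hm : ∃ y g, legalMove G (applyMove (applyMove c x col) w1 e) y g
      · refine BobWins.aliceMove _ hm ?_
        intro y col2 hy
        have hc2y : applyMove (applyMove c x col) w1 e y = none := hy.1
        have hw1y : w1 ≠ y := GCN.ne_of_vals hc2w1 hc2y
        by_cases hyu : y = u
        · -- Alice colored u with col2 : Bob blocks v
          subst hyu
          have hca : col2 ≠ a := by rintro rfl; exact hy.2 zau hzau hc2zau
          have hcb : col2 ≠ b := by rintro rfl; exact hy.2 zbu hzbu hc2zbu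
          have hce : col2 ≠ e := by rintro rfl; exact hy.2 w1 h1adj hc2w1
          have hcol2f : col2 = f := by
            rcases hcov col2 with h | h | h | h <;> tauto
          obtain ⟨w2, ⟨h2adj, h2deg, h2c⟩, h2x, h2w1, h2y⟩ :=
            GCN.pick_pendant hleavesv x w1 y
          have hcov' : ∀ g : Fin 4, g = a ∨ g = b ∨ g = col2 ∨ g = e := by
            intro g
            rcases hcov g with h | h | h | h
            exacts [Or.inl h, Or.inr (Or.inl h), Or.inr (Or.inr (Or.inr h)),
              Or.inr (Or.inr (Or.inl (hcol2f ▸ h)))]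
          have hzavy : zav ≠ y := GCN.ne_of_vals hc2zav hc2y
          have hzbvy : zbv ≠ y := GCN.ne_of_vals hc2zbv hc2y
          have hvy : v ≠ y := huvne.symm
          refine GCN.kill h2adj h2deg ?_ ?_ hcov' ⟨zav, hzav, ?_⟩ ⟨zbv, hzbv, ?_⟩
            ⟨y, huv.symm, ?_⟩ <;>
            simp [applyMove, Function.update_apply, hvy, hvx, hvw1, hv, h2x, h2w1, h2y, h2c,
              hzavy, hzavx, hzavw1, hczav, hzbvy, hzbvx, hzbvw1, hczbv]
        · -- Alice played elsewhere : Bob blocks u with color f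
          obtain ⟨w2, ⟨h2adj, h2deg, h2c⟩, h2x, h2w1, h2y⟩ :=
            GCN.pick_pendant hleavesu x w1 y
          have hzauy : zau ≠ y := GCN.ne_of_vals hc2zau hc2y
          have hzbuy : zbu ≠ y := GCN.ne_of_vals hc2zbu hc2y
          have huy : u ≠ y := fun h => hyu h.symm
          refine GCN.kill h2adj h2deg ?_ ?_ hcov ⟨zau, hzau, ?_⟩ ⟨zbu, hzbu, ?_⟩
            ⟨w1, h1adj, ?_⟩ <;>
            simp [applyMove, Function.update_apply, huy, hux, huw1, hu, h2x, h2w1, h2y, h2c,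
              hzauy, hzaux, hzauw1, hczau, hzbuy, hzbux, hzbuw1, hczbu, hw1y]
      · push_neg at hm
        exact BobWins.endPos _ _ hm ⟨u, hc2u⟩
end

section
/- For every odd integer ℓ ≥ 3 and every integer p ≥ 1, the graph G(ℓ, p) is a cactus, its girth equals ℓ, and its cycle-distance equals 2p. Moreover every cycle of G(ℓ, p) is odd and every vertex of G(ℓ, p) that is not a leaf has at least 8 pendant neighbors. -/
namespace GCN

/-- A cactus is a graph in which every edge belongs to at most one cycle; equivalently, any two
cycles sharing an edge have the same edge set. -/
def IsCactus {V : Type} (G : SimpleGraph V) : Prop :=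
  ∀ ⦃u v : V⦄ (c₁ : G.Walk u u) (c₂ : G.Walk v v), c₁.IsCycle → c₂.IsCycle →
    ∀ e : Sym2 V, e ∈ c₁.edges → e ∈ c₂.edges →
      ∀ e' : Sym2 V, e' ∈ c₁.edges ↔ e' ∈ c₂.edges

/-- The cycle-distance of a graph : the minimum length of a path whose two endpoints lie on
two different cycles (cycles being identified with their edge sets), as an `ℕ∞`. -/
noncomputable def cycleDistance {V : Type} (G : SimpleGraph V) : ℕ∞ :=
  ⨅ (u : V) (v : V) (c₁ : G.Walk u u) (c₂ : G.Walk v v) (_ : c₁.IsCycle) (_ : c₂.IsCycle)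
    (_ : ¬ ∀ e : Sym2 V, e ∈ c₁.edges ↔ e ∈ c₂.edges) (P : G.Walk u v) (_ : P.IsPath),
    (P.length : ℕ∞)

end GCN

namespace GCN

/-- Vertices of one copy of the core construction : either one of the five spine vertices
`x y z y' x'` (indexed by `Fin 5`), or a vertex of one of the two attachments of a spine
vertex.  An attachment is a path of length `p` from the spine vertex to an `ℓ`-cycle : its
vertices are the `p - 1` interior path vertices (`Fin (p - 1)`, the vertex indexed by `i`
being at distance `i + 1` from the spine vertex) together with the `ℓ` cycle vertices
(`Fin ℓ`, the cycle vertex `0` being the endpoint of the attaching path). -/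
abbrev BaseV (ℓ p : ℕ) : Type := Fin 5 ⊕ Fin 5 × Fin 2 × (Fin (p - 1) ⊕ Fin ℓ)

/-- Vertices of the two disjoint copies of the core construction. -/
abbrev CoreV (ℓ p : ℕ) : Type := Bool × BaseV ℓ p

/-- Vertices of the graph `G(ℓ, p)` : a core vertex `v` is represented by `(v, none)`, and its
eight pendant leaves are `(v, some i)` for `i : Fin 8`. -/
abbrev GV (ℓ p : ℕ) : Type := CoreV ℓ p × Option (Fin 8)

/-- The adjacency relation of one copy of the core construction. -/
def baseAdj (ℓ p : ℕ) : BaseV ℓ p → BaseV ℓ p → Prop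
  | .inl s, .inl t => s.val + 1 = t.val ∨ t.val + 1 = s.val
  | .inl s, .inr (s', _, .inl i) => s = s' ∧ i.val = 0
  | .inr (s', _, .inl i), .inl s => s = s' ∧ i.val = 0
  | .inl s, .inr (s', _, .inr c) => s = s' ∧ p = 1 ∧ c.val = 0
  | .inr (s', _, .inr c), .inl s => s = s' ∧ p = 1 ∧ c.val = 0
  | .inr (s, j, .inl i), .inr (s', j', .inl i') =>
      s = s' ∧ j = j' ∧ (i.val + 1 = i'.val ∨ i'.val + 1 = i.val)
  | .inr (s, j, .inl i), .inr (s', j', .inr d) =>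
      s = s' ∧ j = j' ∧ i.val + 1 = p - 1 ∧ d.val = 0
  | .inr (s, j, .inr d), .inr (s', j', .inl i) =>
      s = s' ∧ j = j' ∧ i.val + 1 = p - 1 ∧ d.val = 0
  | .inr (s, j, .inr d), .inr (s', j', .inr d') =>
      s = s' ∧ j = j' ∧ ((d.val + 1) % ℓ = d'.val ∨ (d'.val + 1) % ℓ = d.val)

/-- The adjacency relation of `G(ℓ, p)` : core vertices are adjacent within the same copy
according to `baseAdj`, and each leaf is adjacent exactly to the core vertex it hangs from. -/
def gAdj (ℓ p : ℕ) : GV ℓ p → GV ℓ p → Prop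
  | ((b, x), none), ((b', y), none) => b = b' ∧ baseAdj ℓ p x y
  | (v, none), (w, some _) => v = w
  | (v, some _), (w, none) => v = w
  | (_, some _), (_, some _) => False

/-- The graph `G(ℓ, p)` : a path on five vertices `x y z y' x'`, two cycles of length `ℓ`
attached to each of these five vertices by paths of length `p`, all of this taken in two
disjoint copies, and 8 pendant leaves attached to every vertex. -/
def GraphLP (ℓ p : ℕ) : SimpleGraph (GV ℓ p) := SimpleGraph.fromRel (gAdj ℓ p)


instance (ℓ p : ℕ) : DecidableEq (GV ℓ p) := instDecidableEqProd

instance (ℓ p : ℕ) : Fintype (GV ℓ p) := instFintypeProd _ _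

noncomputable instance (ℓ p : ℕ) : DecidableRel (GraphLP ℓ p).Adj := Classical.decRel _

end GCN


namespace GCN
open SimpleGraph

variable {V : Type} {G : SimpleGraph V}

lemma cut_walk (f : V → Bool) {x y : V}
    (hcross : ∀ a b, G.Adj a b → f a ≠ f b → s(a, b) = s(x, y)) :
    ∀ {u v : V} (w : G.Walk u v), s(x, y) ∉ w.edges → f u = f v := by
  intro u v w
  induction w with
  | nil => intro _; rfl
  | @cons a a' v h q ih =>
    intro he
    rw [SimpleGraph.Walk.edges_cons, List.mem_cons] at he
    push_neg at he
    by_cases hfa : f a = f a'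
    · exact hfa.trans (ih he.2)
    · exact absurd ((hcross _ _ h hfa)).symm he.1

lemma cut_bridge (f : V → Bool) {x y : V} (hxy : G.Adj x y) (hf : f x ≠ f y)
    (hcross : ∀ a b, G.Adj a b → f a ≠ f b → s(a, b) = s(x, y)) :
    ∀ ⦃u : V⦄ (c : G.Walk u u), c.IsCycle → s(x, y) ∉ c.edges := by
  have hb : G.IsBridge s(x, y) := by
    rw [SimpleGraph.isBridge_iff_adj_and_forall_walk_mem_edges]
    refine fun p => ?_
    by_contra hne
    exact hf (cut_walk f hcross p hne)
  exact (SimpleGraph.isBridge_iff_adj_and_forall_cycle_notMem hxy).mp hb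

lemma cycle_two_neighbors [DecidableEq V] {u x : V} (c : G.Walk u u) (hc : c.IsCycle) (hx : x ∈ c.support) :
    ∃ y z : V, y ≠ z ∧ s(x, y) ∈ c.edges ∧ s(x, z) ∈ c.edges := by
  have hc' := hc.rotate hx
  have hperm := (c.rotate_edges _ hx).perm
  suffices h : ∃ y z : V, y ≠ z ∧ s(x, y) ∈ (c.rotate x hx).edges ∧ s(x, z) ∈ (c.rotate x hx).edges by
    obtain ⟨y, z, hyz, h1, h2⟩ := h
    exact ⟨y, z, hyz, hperm.mem_iff.mp h1, hperm.mem_iff.mp h2⟩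
  set c' := c.rotate x hx with hc'def
  clear_value c'
  clear hperm hc'def hx
  cases c' with
  | nil => exact absurd rfl hc'.ne_nil
  | @cons _ v₁ _ h q =>
    rw [SimpleGraph.Walk.cons_isCycle_iff] at hc'
    obtain ⟨hq, hne⟩ := hc'
    obtain ⟨z, hz, q', hq'⟩ := SimpleGraph.Walk.exists_eq_cons_of_ne h.ne q.reverse
    refine ⟨v₁, z, fun hvz => ?_, List.mem_cons_self, List.mem_cons_of_mem _ ?_⟩
    · apply hne
      have : s(x, z) ∈ q.reverse.edges := by rw [hq']; exact List.mem_cons_self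
      rw [SimpleGraph.Walk.edges_reverse, List.mem_reverse] at this
      subst hvz; exact this
    · have : s(x, z) ∈ q.reverse.edges := by rw [hq']; exact List.mem_cons_self
      rwa [SimpleGraph.Walk.edges_reverse, List.mem_reverse] at this

end GCN
namespace GCN
open SimpleGraph

variable {ℓ p : ℕ}

/-- the `d`-th vertex of the attached cycle of component `k`. -/
def cvert (k : Bool × Fin 5 × Fin 2) (d : Fin ℓ) : GV ℓ p :=
  ((k.1, Sum.inr (k.2.1, k.2.2, Sum.inr d)), none)

/-- successor on the `ℓ`-cycle. -/
def nxt (d : Fin ℓ) : Fin ℓ :=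
  ⟨(d.val + 1) % ℓ, Nat.mod_lt _ (Nat.lt_of_le_of_lt (Nat.zero_le _) d.isLt)⟩

def ringE (k : Bool × Fin 5 × Fin 2) (d : Fin ℓ) : Sym2 (GV ℓ p) :=
  s(cvert k d, cvert k (nxt d))

/-- spine index of a base vertex. -/
def spIdx : BaseV ℓ p → ℕ
  | .inl s => s.val
  | .inr (s, _, _) => s.val

/-- depth of an attachment slot. -/
def bdep : (Fin (p - 1) ⊕ Fin ℓ) → ℕ
  | .inl i => i.val + 1
  | .inr _ => p

/-- the vertex at depth `m` on the attachment `(s, j)` (for `m ≤ p`; `m = p` is the cycle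
vertex `0`). -/
def av (s : Fin 5) (j : Fin 2) (d0 : Fin ℓ) : ℕ → BaseV ℓ p
  | 0 => .inl s
  | (m + 1) => if h : m < p - 1 then .inr (s, j, .inl ⟨m, h⟩) else .inr (s, j, .inr d0)

lemma adj_iff {a b : GV ℓ p} :
    (GraphLP ℓ p).Adj a b ↔ a ≠ b ∧ (gAdj ℓ p a b ∨ gAdj ℓ p b a) :=
  SimpleGraph.fromRel_adj _ a b

lemma adj_leaf {x : CoreV ℓ p} {i : Fin 8} {z : GV ℓ p}
    (h : (GraphLP ℓ p).Adj z (x, some i)) : z = (x, none) := by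
  rw [adj_iff] at h
  obtain ⟨hne, hor⟩ := h
  obtain ⟨w, o⟩ := z
  rcases o with _ | i'
  · rcases hor with h | h <;> simp only [gAdj] at h
    · have : w = x := by rcases w with ⟨a, b⟩; rcases x with ⟨c, d⟩; simpa using h
      simp [this]
    · have : w = x := by rcases w with ⟨a, b⟩; rcases x with ⟨c, d⟩; simpa using h.symm
      simp [this]
  · rcases hor with h | h <;> simp only [gAdj] at h

/-- reduction of the crossing condition for cuts that only depend on the core part. -/
lemma core_cut {g : Bool → BaseV ℓ p → Bool} {β : Bool} {x₀ y₀ : BaseV ℓ p}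
    (hg : ∀ (b : Bool) (x y : BaseV ℓ p), baseAdj ℓ p x y → g b x ≠ g b y →
      b = β ∧ ((x = x₀ ∧ y = y₀) ∨ (x = y₀ ∧ y = x₀))) :
    ∀ a b : GV ℓ p, (GraphLP ℓ p).Adj a b → g a.1.1 a.1.2 ≠ g b.1.1 b.1.2 →
      s(a, b) = s(((β, x₀), none), ((β, y₀), none)) := by
  rintro ⟨⟨b₁, x⟩, o₁⟩ ⟨⟨b₂, y⟩, o₂⟩ hadj hf
  rw [adj_iff] at hadj
  obtain ⟨hne, hor⟩ := hadj
  rcases o₁ with _ | i₁ <;> rcases o₂ with _ | i₂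
  · rcases hor with h | h <;> simp only [gAdj] at h
    · obtain ⟨rfl, hb⟩ := h
      obtain ⟨rfl, hxy⟩ := hg _ _ _ hb hf
      rcases hxy with ⟨rfl, rfl⟩ | ⟨rfl, rfl⟩
      · rfl
      · exact Sym2.eq_swap
    · obtain ⟨rfl, hb⟩ := h
      obtain ⟨rfl, hxy⟩ := hg _ _ _ hb hf.symm
      rcases hxy with ⟨rfl, rfl⟩ | ⟨rfl, rfl⟩
      · exact Sym2.eq_swap
      · rfl
  · exfalso
    have hxy : (b₁, x) = ((b₂, y) : CoreV ℓ p) := by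
      rcases hor with h | h <;> simp only [gAdj] at h
      exacts [h, h.symm]
    obtain ⟨rfl, rfl⟩ := Prod.mk.injEq .. ▸ hxy
    exact hf rfl
  · exfalso
    have hxy : (b₂, y) = ((b₁, x) : CoreV ℓ p) := by
      rcases hor with h | h <;> simp only [gAdj] at h
      exacts [h.symm, h]
    obtain ⟨rfl, rfl⟩ := Prod.mk.injEq .. ▸ hxy
    exact hf rfl
  · rcases hor with h | h <;> simp only [gAdj] at h

end GCN
namespace GCN
open SimpleGraph

variable {ℓ p : ℕ}

lemma leaf_bridge (x : CoreV ℓ p) (i : Fin 8) :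
    ∀ ⦃u : GV ℓ p⦄ (c : (GraphLP ℓ p).Walk u u), c.IsCycle →
      s(((x, none) : GV ℓ p), (x, some i)) ∉ c.edges := by
  apply cut_bridge (fun z => decide (z = (x, some i)))
  · rw [adj_iff]
    refine ⟨by simp, Or.inl ?_⟩
    show (x : CoreV ℓ p) = x
    rfl
  · simp
  · intro a b hadj hf
    by_cases hb : b = (x, some i)
    · subst hb
      rw [adj_leaf hadj]
    · have ha : a = (x, some i) := by
        by_contra ha
        simp [ha, hb] at hf
      subst ha
      rw [adj_leaf hadj.symm]
      exact Sym2.eq_swap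

lemma spine_bridge (β : Bool) (s t : Fin 5) (hst : s.val + 1 = t.val) :
    ∀ ⦃u : GV ℓ p⦄ (c : (GraphLP ℓ p).Walk u u), c.IsCycle →
      s((((β, Sum.inl s), none) : GV ℓ p), ((β, Sum.inl t), none)) ∉ c.edges := by
  apply cut_bridge (fun z => decide (z.1.1 = β ∧ t.val ≤ spIdx z.1.2))
  · rw [adj_iff]
    constructor
    · simp only [ne_eq, Prod.mk.injEq, and_true]
      rintro ⟨-, h⟩
      simp only [Sum.inl.injEq] at h
      omega
    · left
      show β = β ∧ _
      exact ⟨rfl, Or.inl hst⟩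
  · simp only [ne_eq, decide_eq_decide, spIdx, eq_self_iff_true, true_and]
    intro h
    omega
  · refine core_cut (g := fun b x => decide (b = β ∧ t.val ≤ spIdx x)) ?_
    intro b x y hxy hgxy
    have hb : b = β := by
      by_contra hb
      simp [hb] at hgxy
    subst hb
    simp only [ne_eq, decide_eq_decide, true_and] at hgxy
    rcases x with s' | ⟨s', j', w⟩ <;> rcases y with t' | ⟨t', j'', w'⟩
    · simp only [baseAdj] at hxy
      simp only [spIdx] at hgxy
      refine ⟨rfl, ?_⟩
      simp only [Sum.inl.injEq, Fin.ext_iff]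
      omega
    · exfalso
      rcases w' with i | c <;> simp only [baseAdj] at hxy <;>
        · obtain ⟨rfl, -⟩ := hxy
          simp [spIdx] at hgxy
    · exfalso
      rcases w with i | c <;> simp only [baseAdj] at hxy <;>
        · obtain ⟨rfl, -⟩ := hxy
          simp [spIdx] at hgxy
    · exfalso
      rcases w with i | c <;> rcases w' with i' | c' <;> simp only [baseAdj] at hxy <;>
        · obtain ⟨rfl, -⟩ := hxy
          simp [spIdx] at hgxy

end GCN
namespace GCN
open SimpleGraph

variable {ℓ p : ℕ}

def attB (s : Fin 5) (j : Fin 2) (t : ℕ) : BaseV ℓ p → Bool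
  | .inl _ => false
  | .inr (s', j', w) => decide (s' = s) && decide (j' = j) && decide (t ≤ bdep w)

lemma bool_ne_false {a : Bool} (h : false ≠ a) : a = true := by
  cases a
  · exact absurd rfl h
  · rfl

lemma attB_inl (s : Fin 5) (j : Fin 2) (t : ℕ) (s' : Fin 5) :
    attB s j t (Sum.inl s' : BaseV ℓ p) = false := rfl

lemma attB_inr (s : Fin 5) (j : Fin 2) (t : ℕ) (s' : Fin 5) (j' : Fin 2)
    (w : Fin (p - 1) ⊕ Fin ℓ) :
    attB s j t (Sum.inr (s', j', w) : BaseV ℓ p) =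
      (decide (s' = s) && decide (j' = j) && decide (t ≤ bdep w)) := rfl

lemma av_zero (s : Fin 5) (j : Fin 2) (d0 : Fin ℓ) : av s j d0 0 = (.inl s : BaseV ℓ p) := rfl

lemma av_path (s : Fin 5) (j : Fin 2) (d0 : Fin ℓ) {m : ℕ} (h : m < p - 1) :
    av s j d0 (m + 1) = (.inr (s, j, .inl ⟨m, h⟩) : BaseV ℓ p) := by simp [av, h]

lemma av_cyc (s : Fin 5) (j : Fin 2) (d0 : Fin ℓ) {m : ℕ} (h : ¬ m < p - 1) :
    av s j d0 (m + 1) = (.inr (s, j, .inr d0) : BaseV ℓ p) := by simp [av, h]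

lemma attB_av (s : Fin 5) (j : Fin 2) (d0 : Fin ℓ) {t : ℕ} (h1 : 1 ≤ t) (h2 : t ≤ p) (m : ℕ) :
    attB s j t (av s j d0 m : BaseV ℓ p) = decide (t ≤ m) := by
  cases m with
  | zero =>
    have : ¬ t ≤ 0 := by omega
    simp [av_zero, attB, this]
  | succ m =>
    by_cases h : m < p - 1
    · rw [av_path s j d0 h, attB_inr,
        show bdep (Sum.inl ⟨m, h⟩ : Fin (p - 1) ⊕ Fin ℓ) = m + 1 from rfl]
      simp
    · rw [av_cyc s j d0 h, attB_inr,
        show bdep (Sum.inr d0 : Fin (p - 1) ⊕ Fin ℓ) = p from rfl]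
      have e1 : t ≤ p := h2
      have e2 : t ≤ m + 1 := by omega
      simp [e1, e2]

lemma av_baseAdj (s : Fin 5) (j : Fin 2) (d0 : Fin ℓ) (hd0 : d0.val = 0) {m : ℕ}
    (hm : m + 1 ≤ p) : baseAdj ℓ p (av s j d0 m) (av s j d0 (m + 1)) := by
  cases m with
  | zero =>
    by_cases h : 0 < p - 1
    · rw [av_path s j d0 h]
      exact ⟨rfl, rfl⟩
    · rw [av_cyc s j d0 h]
      exact ⟨rfl, by omega, hd0⟩
  | succ m =>
    have hm1 : m < p - 1 := by omega
    rw [av_path s j d0 hm1]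
    by_cases h : m + 1 < p - 1
    · rw [av_path s j d0 h]
      exact ⟨rfl, rfl, Or.inl rfl⟩
      
    · rw [av_cyc s j d0 h]
      exact ⟨rfl, rfl, by show m + 1 = p - 1; omega, hd0⟩

lemma av_ne (s : Fin 5) (j : Fin 2) (d0 : Fin ℓ) {m : ℕ} (hm : m + 1 ≤ p) :
    (av s j d0 m : BaseV ℓ p) ≠ av s j d0 (m + 1) := by
  cases m with
  | zero =>
    by_cases h : 0 < p - 1 <;> [rw [av_path s j d0 h]; rw [av_cyc s j d0 h]] <;> simp [av_zero]
  | succ m =>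
    have hm1 : m < p - 1 := by omega
    rw [av_path s j d0 hm1]
    by_cases h : m + 1 < p - 1
    · rw [av_path s j d0 h]
      intro hcon
      simp only [Sum.inr.injEq, Prod.mk.injEq, Sum.inl.injEq, Fin.mk.injEq] at hcon
      omega
    · rw [av_cyc s j d0 h]
      simp

lemma av_adj (β : Bool) (s : Fin 5) (j : Fin 2) (d0 : Fin ℓ) (hd0 : d0.val = 0) {m : ℕ}
    (hm : m + 1 ≤ p) :
    (GraphLP ℓ p).Adj ((β, av s j d0 m), none) ((β, av s j d0 (m + 1)), none) := by
  rw [adj_iff]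
  constructor
  · simp only [ne_eq, Prod.mk.injEq, and_true, true_and]
    exact fun h => av_ne s j d0 hm h
  · exact Or.inl ⟨rfl, av_baseAdj s j d0 hd0 hm⟩

lemma att_bridge (β : Bool) (s : Fin 5) (j : Fin 2) (d0 : Fin ℓ) (hd0 : d0.val = 0)
    {t : ℕ} (h1 : 1 ≤ t) (h2 : t ≤ p) :
    ∀ ⦃u : GV ℓ p⦄ (c : (GraphLP ℓ p).Walk u u), c.IsCycle →
      s((((β, av s j d0 (t - 1)), none) : GV ℓ p), ((β, av s j d0 t), none)) ∉ c.edges := by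
  have htt : t - 1 + 1 = t := by omega
  apply cut_bridge (fun z => decide (z.1.1 = β) && attB s j t z.1.2)
  · have h := av_adj (ℓ := ℓ) (p := p) β s j d0 hd0 (m := t - 1) (by omega)
    rwa [htt] at h
  · have e1 := attB_av s j d0 h1 h2 (t - 1)
    have e2 := attB_av s j d0 h1 h2 t
    simp only [ne_eq, decide_true, Bool.true_and]
    rw [e1, e2]
    have hA : ¬ t ≤ t - 1 := by omega
    simp [hA]
  · refine core_cut (g := fun b x => decide (b = β) && attB s j t x) ?_
    intro b x y hxy hgxy
    have hb : b = β := by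
      by_contra hb
      simp [hb] at hgxy
    subst hb
    refine ⟨rfl, ?_⟩
    simp only [decide_true, Bool.true_and, ne_eq] at hgxy
    rcases x with s' | ⟨s', j', w⟩ <;> rcases y with t' | ⟨t', j'', w'⟩
    · exact absurd rfl hgxy
    · -- x spine, y in attachment : entry edge
      rw [attB_inl] at hgxy
      have hy' := bool_ne_false hgxy
      rcases w' with i | c <;> simp only [baseAdj] at hxy <;>
        rw [attB_inr] at hy' <;>
        simp only [bdep, Bool.and_eq_true, decide_eq_true_eq] at hy'
      · obtain ⟨rfl, hi⟩ := hxy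
        obtain ⟨⟨hs1, hj1⟩, hti⟩ := hy'
        have ht1 : t = 1 := by have := of_decide_eq_true hti; omega
        subst ht1
        left
        have h0 : (0 : ℕ) < p - 1 := lt_of_le_of_lt (Nat.zero_le _) i.isLt
        constructor
        · rw [av_zero, hs1]
        · rw [av_path s j d0 h0, hs1, hj1,
            show i = (⟨0, h0⟩ : Fin (p - 1)) from Fin.ext (by simpa using hi)]
      · obtain ⟨rfl, hp1, hc⟩ := hxy
        obtain ⟨⟨hs1, hj1⟩, hti⟩ := hy'
        have ht1 : t = 1 := by omega
        subst ht1
        left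
        have h0 : ¬ (0 : ℕ) < p - 1 := by omega
        constructor
        · rw [av_zero, hs1]
        · rw [av_cyc s j d0 h0, hs1, hj1, show c = d0 from Fin.ext (by rw [hc, hd0])]
    · -- x in attachment, y spine : entry edge reversed
      rw [attB_inl] at hgxy
      have hy' := bool_ne_false (Ne.symm hgxy)
      rcases w with i | c <;> simp only [baseAdj] at hxy <;>
        rw [attB_inr] at hy' <;>
        simp only [bdep, Bool.and_eq_true, decide_eq_true_eq] at hy'
      · obtain ⟨rfl, hi⟩ := hxy
        obtain ⟨⟨hs1, hj1⟩, hti⟩ := hy'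
        have ht1 : t = 1 := by have := of_decide_eq_true hti; omega
        subst ht1
        right
        have h0 : (0 : ℕ) < p - 1 := lt_of_le_of_lt (Nat.zero_le _) i.isLt
        constructor
        · rw [av_path s j d0 h0, hs1, hj1,
            show i = (⟨0, h0⟩ : Fin (p - 1)) from Fin.ext (by simpa using hi)]
        · rw [av_zero, hs1]
      · obtain ⟨rfl, hp1, hc⟩ := hxy
        obtain ⟨⟨hs1, hj1⟩, hti⟩ := hy'
        have ht1 : t = 1 := by omega
        subst ht1
        right
        have h0 : ¬ (0 : ℕ) < p - 1 := by omega
        constructor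
        · rw [av_cyc s j d0 h0, hs1, hj1, show c = d0 from Fin.ext (by rw [hc, hd0])]
        · rw [av_zero, hs1]
    · -- both in attachments
      rw [attB_inr, attB_inr] at hgxy
      have hsj : s' = t' ∧ j' = j'' := by
        rcases w with i | c <;> rcases w' with i' | c' <;>
          simp only [baseAdj] at hxy <;> exact ⟨hxy.1, hxy.2.1⟩
      obtain ⟨h1', h2'⟩ := hsj
      rw [← h1', ← h2'] at hxy hgxy ⊢
      by_cases hsjv : s' = s ∧ j' = j
      · obtain ⟨hs1, hj1⟩ := hsjv
        rw [hs1, hj1] at hgxy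
        simp only [eq_self_iff_true, decide_true, Bool.true_and, ne_eq,
          decide_eq_decide] at hgxy
        have hcr := hgxy
        rcases w with i | c <;> rcases w' with i' | c'
        · -- path-path
          simp only [baseAdj] at hxy
          obtain ⟨-, -, hii⟩ := hxy
          simp only [bdep] at hcr
          rcases hii with hii | hii
          · have ht : t = i.val + 2 := by omega
            left
            constructor
            · rw [show t - 1 = i.val + 1 from by omega, av_path s j d0 i.isLt, hs1, hj1]
            · rw [show t = i'.val + 1 from by omega, av_path s j d0 i'.isLt, hs1, hj1]
          · have ht : t = i'.val + 2 := by omega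
            right
            constructor
            · rw [show t = i.val + 1 from by omega, av_path s j d0 i.isLt, hs1, hj1]
            · rw [show t - 1 = i'.val + 1 from by omega, av_path s j d0 i'.isLt, hs1, hj1]
        · -- path-cycle
          simp only [baseAdj] at hxy
          obtain ⟨-, -, hip, hc⟩ := hxy
          simp only [bdep] at hcr
          have ht : t = p := by omega
          left
          constructor
          · rw [show t - 1 = i.val + 1 from by omega, av_path s j d0 i.isLt, hs1, hj1]
          · rw [show t = (p - 1) + 1 from by omega, av_cyc s j d0 (by omega), hs1, hj1,
              show c' = d0 from Fin.ext (by rw [hc, hd0])]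
        · -- cycle-path
          simp only [baseAdj] at hxy
          obtain ⟨-, -, hip, hc⟩ := hxy
          simp only [bdep] at hcr
          have ht : t = p := by omega
          right
          constructor
          · rw [show t = (p - 1) + 1 from by omega, av_cyc s j d0 (by omega), hs1, hj1,
              show c = d0 from Fin.ext (by rw [hc, hd0])]
          · rw [show t - 1 = i'.val + 1 from by omega, av_path s j d0 i'.isLt, hs1, hj1]
        · -- cycle-cycle : no crossing
          exact absurd Iff.rfl hcr
      · exfalso
        apply hgxy
        have hfalse : (decide (s' = s) && decide (j' = j)) = false := by
          rcases Decidable.em (s' = s) with hs | hs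
          · rcases Decidable.em (j' = j) with hj | hj
            · exact absurd ⟨hs, hj⟩ hsjv
            · simp [hj]
          · simp [hs]
        simp only [hfalse, Bool.false_and]

end GCN
namespace GCN
open SimpleGraph

variable {ℓ p : ℕ}

lemma av_top (s : Fin 5) (j : Fin 2) (d0 : Fin ℓ) (hp : 1 ≤ p) :
    av s j d0 p = (.inr (s, j, .inr d0) : BaseV ℓ p) := by
  cases p with
  | zero => omega
  | succ m => exact av_cyc s j d0 (by omega)

lemma cycle_edge_ring (hl0 : 0 < ℓ) (hp : 1 ≤ p) {u : GV ℓ p}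
    (c : (GraphLP ℓ p).Walk u u) (hc : c.IsCycle) {e : Sym2 (GV ℓ p)} (he : e ∈ c.edges) :
    ∃ k d, e = (ringE k d : Sym2 (GV ℓ p)) := by
  set d0 : Fin ℓ := ⟨0, hl0⟩ with hd0def
  have hd0 : d0.val = 0 := rfl
  have hedge := SimpleGraph.Walk.edges_subset_edgeSet c he
  induction e using Sym2.ind with
  | _ a b =>
  rw [SimpleGraph.mem_edgeSet] at hedge
  suffices aux : ∀ a b : GV ℓ p, (GraphLP ℓ p).Adj a b → gAdj ℓ p a b →
      s(a, b) ∈ c.edges → ∃ k d, s(a, b) = (ringE k d : Sym2 (GV ℓ p)) by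
    rcases (adj_iff.mp hedge).2 with hg | hg
    · exact aux a b hedge hg he
    · obtain ⟨k, d, hk⟩ := aux b a hedge.symm hg (Sym2.eq_swap ▸ he)
      exact ⟨k, d, Sym2.eq_swap.trans hk⟩
  clear he hedge a b
  rintro ⟨⟨b₁, x⟩, o₁⟩ ⟨⟨b₂, y⟩, o₂⟩ hadj hg he
  rcases o₁ with _ | i₁ <;> rcases o₂ with _ | i₂
  · -- core-core
    simp only [gAdj] at hg
    obtain ⟨rfl, hb⟩ := hg
    rcases x with s | ⟨s, j, w⟩ <;> rcases y with s2 | ⟨s2, j2, w2⟩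
    · rcases hb with hss | hss
      · exact absurd he (spine_bridge b₁ s s2 hss c hc)
      · rw [Sym2.eq_swap] at he
        exact absurd he (spine_bridge b₁ s2 s hss c hc)
    · rcases w2 with i | c2 <;> obtain ⟨rfl, h2⟩ := hb
      · -- entry, p ≥ 2
        have h0 : (0 : ℕ) < p - 1 := lt_of_le_of_lt (Nat.zero_le _) i.isLt
        have hbr := att_bridge b₁ s j2 d0 hd0 (t := 1) le_rfl hp c hc
        rw [show (1 : ℕ) - 1 = 0 from rfl, av_zero, av_path s j2 d0 h0] at hbr
        rw [show i = (⟨0, h0⟩ : Fin (p - 1)) from Fin.ext h2] at he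
        exact absurd he hbr
      · -- entry, p = 1
        obtain ⟨hp1, hc2⟩ := h2
        have h0 : ¬ (0 : ℕ) < p - 1 := by omega
        have hbr := att_bridge b₁ s j2 d0 hd0 (t := 1) le_rfl hp c hc
        rw [show (1 : ℕ) - 1 = 0 from rfl, av_zero, av_cyc s j2 d0 h0] at hbr
        rw [show c2 = d0 from Fin.ext (by rw [hc2, hd0])] at he
        exact absurd he hbr
    · rcases w with i | c2 <;> obtain ⟨rfl, h2⟩ := hb <;> rw [Sym2.eq_swap] at he
      · have h0 : (0 : ℕ) < p - 1 := lt_of_le_of_lt (Nat.zero_le _) i.isLt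
        have hbr := att_bridge b₁ s2 j d0 hd0 (t := 1) le_rfl hp c hc
        rw [show (1 : ℕ) - 1 = 0 from rfl, av_zero, av_path s2 j d0 h0] at hbr
        rw [show i = (⟨0, h0⟩ : Fin (p - 1)) from Fin.ext h2] at he
        exact absurd he hbr
      · obtain ⟨hp1, hc2⟩ := h2
        have h0 : ¬ (0 : ℕ) < p - 1 := by omega
        have hbr := att_bridge b₁ s2 j d0 hd0 (t := 1) le_rfl hp c hc
        rw [show (1 : ℕ) - 1 = 0 from rfl, av_zero, av_cyc s2 j d0 h0] at hbr
        rw [show c2 = d0 from Fin.ext (by rw [hc2, hd0])] at he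
        exact absurd he hbr
    · -- attachment-attachment
      rcases w with i | cc <;> rcases w2 with i' | cc'
      · obtain ⟨rfl, rfl, hii⟩ := hb
        rcases hii with hii | hii
        · have hbr := att_bridge b₁ s j d0 hd0 (t := i.val + 2) (by omega)
            (by have := i'.isLt; omega) c hc
          rw [show i.val + 2 - 1 = i.val + 1 from by omega, av_path s j d0 i.isLt,
            show i.val + 2 = i'.val + 1 from by omega, av_path s j d0 i'.isLt] at hbr
          simp only [Fin.eta] at hbr
          exact absurd he hbr
        · have hbr := att_bridge b₁ s j d0 hd0 (t := i'.val + 2) (by omega)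
            (by have := i.isLt; omega) c hc
          rw [show i'.val + 2 - 1 = i'.val + 1 from by omega, av_path s j d0 i'.isLt,
            show i'.val + 2 = i.val + 1 from by omega, av_path s j d0 i.isLt] at hbr
          simp only [Fin.eta] at hbr
          rw [Sym2.eq_swap] at he
          exact absurd he hbr
      · -- path-cycle
        obtain ⟨rfl, rfl, hip, hcc⟩ := hb
        have hp2 : 2 ≤ p := by have := i.isLt; omega
        have hbr := att_bridge b₁ s j d0 hd0 (t := p) (by omega) le_rfl c hc
        rw [show p - 1 = i.val + 1 from by omega, av_path s j d0 i.isLt,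
          av_top s j d0 hp] at hbr
        simp only [Fin.eta] at hbr
        rw [show cc' = d0 from Fin.ext (by rw [hcc, hd0])] at he
        exact absurd he hbr
      · -- cycle-path
        obtain ⟨rfl, rfl, hip, hcc⟩ := hb
        have hp2 : 2 ≤ p := by have := i'.isLt; omega
        have hbr := att_bridge b₁ s j d0 hd0 (t := p) (by omega) le_rfl c hc
        rw [show p - 1 = i'.val + 1 from by omega, av_path s j d0 i'.isLt,
          av_top s j d0 hp] at hbr
        simp only [Fin.eta] at hbr
        rw [show cc = d0 from Fin.ext (by rw [hcc, hd0]), Sym2.eq_swap] at he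
        exact absurd he hbr
      · -- ring edge!
        obtain ⟨rfl, rfl, hdd⟩ := hb
        rcases hdd with hdd | hdd
        · refine ⟨(b₁, s, j), cc, ?_⟩
          rw [ringE, show nxt cc = cc' from Fin.ext hdd]
          rfl
        · refine ⟨(b₁, s, j), cc', ?_⟩
          have h2 : (ringE (b₁, s, j) cc' : Sym2 (GV ℓ p)) =
              s(cvert (b₁, s, j) cc', cvert (b₁, s, j) cc) := by
            rw [ringE, show nxt cc' = cc from Fin.ext hdd]
          rw [h2]
          exact Sym2.eq_swap
  · -- leaf edge
    simp only [gAdj] at hg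
    obtain ⟨rfl, rfl⟩ := Prod.mk.injEq .. ▸ hg
    exact absurd he (leaf_bridge _ i₂ c hc)
  · simp only [gAdj] at hg
    obtain ⟨rfl, rfl⟩ := Prod.mk.injEq .. ▸ hg
    rw [Sym2.eq_swap] at he
    exact absurd he (leaf_bridge _ i₁ c hc)
  · simp only [gAdj] at hg

end GCN
namespace GCN
open SimpleGraph

variable {ℓ p : ℕ}

lemma nxt_val (d : Fin ℓ) : (nxt d).val = if d.val + 1 = ℓ then 0 else d.val + 1 := by
  have hd := d.isLt
  show (d.val + 1) % ℓ = _
  split_ifs with h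
  · rw [h, Nat.mod_self]
  · exact Nat.mod_eq_of_lt (by omega)

lemma nxt_inj {d d' : Fin ℓ} (h : nxt d = nxt d') : d = d' := by
  have h1 := nxt_val d
  have h2 := nxt_val d'
  have hd := d.isLt
  have hd' := d'.isLt
  rw [h] at h1
  apply Fin.ext
  split_ifs at h1 h2 <;> omega

lemma nxt_ne (hl : 3 ≤ ℓ) (d : Fin ℓ) : d ≠ nxt d := by
  intro h
  have h1 := nxt_val d
  have hd := d.isLt
  rw [← h] at h1
  split_ifs at h1 <;> omega

lemma nxt_nxt_ne (hl : 3 ≤ ℓ) (d : Fin ℓ) : d ≠ nxt (nxt d) := by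
  intro h
  have h1 := nxt_val d
  have h2 := nxt_val (nxt d)
  have hd := d.isLt
  have hd2 := (nxt d).isLt
  rw [← h] at h2
  split_ifs at h1 h2 <;> omega

lemma cvert_inj {k k' : Bool × Fin 5 × Fin 2} {d d' : Fin ℓ}
    (h : (cvert k d : GV ℓ p) = cvert k' d') : k = k' ∧ d = d' := by
  obtain ⟨b, s, j⟩ := k
  obtain ⟨b', s', j'⟩ := k'
  simp only [cvert, Prod.mk.injEq, Sum.inr.injEq] at h
  obtain ⟨⟨rfl, rfl, rfl, rfl⟩, -⟩ := h
  exact ⟨rfl, rfl⟩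

lemma mem_ringE {k : Bool × Fin 5 × Fin 2} {d : Fin ℓ} {x : GV ℓ p}
    (h : x ∈ (ringE k d : Sym2 (GV ℓ p))) : x = cvert k d ∨ x = cvert k (nxt d) := by
  rwa [ringE, Sym2.mem_iff] at h

lemma ringE_eq_iff {k k' : Bool × Fin 5 × Fin 2} {d d' : Fin ℓ}
    (h : (ringE k d : Sym2 (GV ℓ p)) = ringE k' d') :
    k = k' ∧ (d = d' ∨ (d = nxt d' ∧ d' = nxt d)) := by
  rw [ringE, ringE, Sym2.eq_iff] at h
  rcases h with ⟨h1, h2⟩ | ⟨h1, h2⟩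
  · obtain ⟨rfl, rfl⟩ := cvert_inj h1
    exact ⟨rfl, Or.inl rfl⟩
  · obtain ⟨rfl, hd1⟩ := cvert_inj h1
    obtain ⟨-, hd2⟩ := cvert_inj h2
    exact ⟨rfl, Or.inr ⟨hd1, hd2.symm⟩⟩

lemma ring_adj (hl : 3 ≤ ℓ) (k : Bool × Fin 5 × Fin 2) (d : Fin ℓ) :
    (GraphLP ℓ p).Adj (cvert k d) (cvert k (nxt d)) := by
  rw [adj_iff]
  constructor
  · intro h
    exact nxt_ne hl d (cvert_inj h).2
  · left
    obtain ⟨b, s, j⟩ := k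
    exact ⟨rfl, rfl, rfl, Or.inl rfl⟩

lemma iterate_nxt_val (d : Fin ℓ) : ∀ n, (nxt^[n] d).val = (d.val + n) % ℓ
  | 0 => by simp [Nat.mod_eq_of_lt d.isLt]
  | (n + 1) => by
    rw [Function.iterate_succ_apply', nxt_val, iterate_nxt_val d n]
    have h0 : 0 < ℓ := lt_of_le_of_lt (Nat.zero_le _) d.isLt
    have h1 : (d.val + n) % ℓ < ℓ := Nat.mod_lt _ h0
    split_ifs with h
    · have : (d.val + (n + 1)) % ℓ = ((d.val + n) % ℓ + 1) % ℓ := by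
        rw [← Nat.add_assoc, Nat.mod_add_mod]
      rw [this, h, Nat.mod_self]
    · have h3 : (d.val + (n + 1)) % ℓ = ((d.val + n) % ℓ + 1) % ℓ := by
        rw [← Nat.add_assoc, Nat.mod_add_mod]
      rw [h3]
      exact (Nat.mod_eq_of_lt (by omega)).symm

lemma iterate_nxt_surj (d₀ d : Fin ℓ) : ∃ n, nxt^[n] d₀ = d := by
  refine ⟨d.val + ℓ - d₀.val, Fin.ext ?_⟩
  rw [iterate_nxt_val]
  have h1 := d₀.isLt
  have h2 := d.isLt
  rw [show d₀.val + (d.val + ℓ - d₀.val) = d.val + ℓ from by omega, Nat.add_mod_right,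
    Nat.mod_eq_of_lt h2]

lemma walk_comp {k : Bool × Fin 5 × Fin 2} :
    ∀ {x y : GV ℓ p} (w : (GraphLP ℓ p).Walk x y),
      (∀ e ∈ w.edges, ∃ k' d, e = (ringE k' d : Sym2 (GV ℓ p))) →
      (∃ d, x = cvert k d) →
      (∀ z ∈ w.support, ∃ d, z = cvert k d) := by
  intro x y w
  induction w with
  | nil =>
    intro _ hx z hz
    rw [SimpleGraph.Walk.support_nil, List.mem_singleton] at hz
    exact hz ▸ hx
  | @cons a a' v h q ih =>
    intro hE hx z hz
    obtain ⟨k', d', he⟩ := hE _ (List.mem_cons_self)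
    obtain ⟨dx, rfl⟩ := hx
    have hmem : (cvert k dx : GV ℓ p) ∈ (ringE k' d' : Sym2 (GV ℓ p)) := by
      rw [← he]
      exact Sym2.mem_mk_left _ _
    have hmem' : (a' : GV ℓ p) ∈ (ringE k' d' : Sym2 (GV ℓ p)) := by
      rw [← he]
      exact Sym2.mem_mk_right _ _
    have hk : k' = k := by
      rcases mem_ringE hmem with h' | h' <;> exact ((cvert_inj h').1).symm
    subst hk
    have ha' : ∃ d, a' = cvert k' d := by
      rcases mem_ringE hmem' with h' | h'
      · exact ⟨d', h'⟩
      · exact ⟨nxt d', h'⟩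
    rw [SimpleGraph.Walk.support_cons, List.mem_cons] at hz
    rcases hz with rfl | hz
    · exact ⟨dx, rfl⟩
    · exact ih (fun e he' => hE e (List.mem_cons_of_mem _ he')) ha' z hz

end GCN
namespace GCN
open SimpleGraph

variable {ℓ p : ℕ}

lemma cycle_spec (hl : 3 ≤ ℓ) (hp : 1 ≤ p) {u : GV ℓ p}
    (c : (GraphLP ℓ p).Walk u u) (hc : c.IsCycle) :
    ∃ k d₀, u = cvert k d₀ ∧ c.length = ℓ ∧
      ∀ e, e ∈ c.edges ↔ ∃ d, e = (ringE k d : Sym2 (GV ℓ p)) := by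
  have hl0 : 0 < ℓ := by omega
  have hE : ∀ e ∈ c.edges, ∃ k d, e = (ringE k d : Sym2 (GV ℓ p)) :=
    fun e he => cycle_edge_ring hl0 hp c hc he
  -- the base point lies on a ring
  have hlen3 : 3 ≤ c.length := hc.three_le_length
  have h01 : c.toSubgraph.Adj (c.getVert 0) (c.getVert 1) :=
    c.toSubgraph_adj_getVert (by omega)
  rw [SimpleGraph.Walk.getVert_zero] at h01
  have he0 : s(u, c.getVert 1) ∈ c.edges := by
    rw [← SimpleGraph.Walk.mem_edges_toSubgraph]
    exact h01
  obtain ⟨k, d1, hk⟩ := hE _ he0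
  have humem : (u : GV ℓ p) ∈ (ringE k d1 : Sym2 (GV ℓ p)) := by
    rw [← hk]; exact Sym2.mem_mk_left _ _
  have hu : ∃ d₀, u = cvert k d₀ := by
    rcases mem_ringE humem with h' | h'
    · exact ⟨d1, h'⟩
    · exact ⟨nxt d1, h'⟩
  obtain ⟨d₀, hud⟩ := hu
  have hsup : ∀ z ∈ c.support, ∃ d, z = cvert k d :=
    walk_comp c hE ⟨d₀, hud⟩
  have hEk : ∀ e ∈ c.edges, ∃ d, e = (ringE k d : Sym2 (GV ℓ p)) := by
    intro e he
    obtain ⟨k', d, rfl⟩ := hE e he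
    have hfst : (cvert k' d : GV ℓ p) ∈ c.support :=
      c.fst_mem_support_of_mem_edges (by rw [ringE] at he; exact he)
    obtain ⟨dz, hz⟩ := hsup _ hfst
    obtain ⟨rfl, -⟩ := cvert_inj hz
    exact ⟨d, rfl⟩
  -- two neighbours on the cycle
  have step : ∀ d : Fin ℓ, cvert k d ∈ c.support →
      (ringE k d : Sym2 (GV ℓ p)) ∈ c.edges ∧ cvert k (nxt d) ∈ c.support := by
    intro d hx
    have key : ∀ y, s((cvert k d : GV ℓ p), y) ∈ c.edges →
        (y = cvert k (nxt d) ∧ (ringE k d : Sym2 (GV ℓ p)) ∈ c.edges) ∨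
        (∃ d', y = cvert k d' ∧ d = nxt d') := by
      intro y hy
      obtain ⟨d', hd'⟩ := hEk _ hy
      rw [ringE, Sym2.eq_iff] at hd'
      rcases hd' with ⟨h1, h2⟩ | ⟨h1, h2⟩
      · left
        obtain ⟨-, rfl⟩ := cvert_inj h1
        refine ⟨h2, ?_⟩
        rw [ringE, ← h2]
        rwa [← h1]
      · right
        exact ⟨d', h2, (cvert_inj h1).2⟩
    obtain ⟨y, z, hyz, hy, hz⟩ := cycle_two_neighbors c hc hx
    have hmain : (ringE k d : Sym2 (GV ℓ p)) ∈ c.edges := by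
      rcases key y hy with ⟨-, h⟩ | ⟨dy, rfl, hdy⟩
      · exact h
      · rcases key z hz with ⟨-, h⟩ | ⟨dz, rfl, hdz⟩
        · exact h
        · exact absurd (congrArg (cvert k) (nxt_inj (hdy ▸ hdz))) hyz
    refine ⟨hmain, ?_⟩
    exact c.snd_mem_support_of_mem_edges (by rw [ringE] at hmain; exact hmain)
  have iter : ∀ n, cvert k (nxt^[n] d₀) ∈ c.support := by
    intro n
    induction n with
    | zero => rw [Function.iterate_zero_apply, ← hud]; exact c.start_mem_support
    | succ n ih =>
      rw [Function.iterate_succ_apply']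
      exact (step _ ih).2
  have all_edges : ∀ d : Fin ℓ, (ringE k d : Sym2 (GV ℓ p)) ∈ c.edges := by
    intro d
    obtain ⟨n, hn⟩ := iterate_nxt_surj d₀ d
    have := (step _ (iter n)).1
    rwa [hn] at this
  have hiff : ∀ e, e ∈ c.edges ↔ ∃ d, e = (ringE k d : Sym2 (GV ℓ p)) := by
    intro e
    refine ⟨hEk e, ?_⟩
    rintro ⟨d, rfl⟩
    exact all_edges d
  -- length
  have hinj : Function.Injective (fun d : Fin ℓ => (ringE k d : Sym2 (GV ℓ p))) := by
    intro d d' h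
    rcases (ringE_eq_iff h).2 with h' | ⟨h1, h2⟩
    · exact h'
    · exact absurd (h1.trans (congrArg nxt h2)) (nxt_nxt_ne hl d)
  have le1 : ℓ ≤ c.length := by
    have hsubset : Finset.image (fun d : Fin ℓ => (ringE k d : Sym2 (GV ℓ p))) Finset.univ
        ⊆ c.edges.toFinset := by
      intro e he
      rw [List.mem_toFinset]
      obtain ⟨d, -, rfl⟩ := Finset.mem_image.mp he
      exact all_edges d
    calc ℓ = Fintype.card (Fin ℓ) := (Fintype.card_fin ℓ).symm
    _ = (Finset.image (fun d : Fin ℓ => (ringE k d : Sym2 (GV ℓ p))) Finset.univ).card := by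
        rw [Finset.card_image_of_injective _ hinj, Finset.card_univ]
    _ ≤ c.edges.toFinset.card := Finset.card_le_card hsubset
    _ ≤ c.edges.length := c.edges.toFinset_card_le
    _ = c.length := c.length_edges
  have le2 : c.length ≤ ℓ := by
    have hnd : c.support.tail.Nodup := hc.support_nodup
    have hsubset : c.support.tail.toFinset ⊆ Finset.image (cvert k) Finset.univ := by
      intro z hz
      rw [List.mem_toFinset] at hz
      obtain ⟨d, rfl⟩ := hsup z (List.mem_of_mem_tail hz)
      exact Finset.mem_image.mpr ⟨d, Finset.mem_univ _, rfl⟩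
    calc c.length = c.support.tail.length := by
          rw [List.length_tail, SimpleGraph.Walk.length_support]
          omega
    _ = c.support.tail.toFinset.card := (List.toFinset_card_of_nodup hnd).symm
    _ ≤ (Finset.image (cvert k) Finset.univ).card := Finset.card_le_card hsubset
    _ ≤ (Finset.univ : Finset (Fin ℓ)).card := Finset.card_image_le
    _ = ℓ := by rw [Finset.card_univ, Fintype.card_fin]
  exact ⟨k, d₀, hud, le_antisymm le2 le1, hiff⟩

end GCN
namespace GCN
open SimpleGraph

variable {ℓ p : ℕ}

lemma mod_inj {n a i i' : ℕ} (hii : i < i' + n) (hii' : i' < i + n)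
    (h : (a + i) % n = (a + i') % n) : i = i' := by
  rcases Nat.le_total i i' with hle | hle
  · have hmod : (a + i) ≡ (a + i') [MOD n] := h
    have hdvd : n ∣ (a + i') - (a + i) := (Nat.modEq_iff_dvd' (by omega)).mp hmod
    rcases Nat.eq_zero_or_pos ((a + i') - (a + i)) with h0 | h0
    · omega
    · have := Nat.le_of_dvd h0 hdvd
      omega
  · have hmod : (a + i') ≡ (a + i) [MOD n] := h.symm
    have hdvd : n ∣ (a + i) - (a + i') := (Nat.modEq_iff_dvd' (by omega)).mp hmod
    rcases Nat.eq_zero_or_pos ((a + i) - (a + i')) with h0 | h0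
    · omega
    · have := Nat.le_of_dvd h0 hdvd
      omega

lemma ringE_inj (hl : 3 ≤ ℓ) (k : Bool × Fin 5 × Fin 2) :
    Function.Injective (fun d : Fin ℓ => (ringE k d : Sym2 (GV ℓ p))) := by
  intro d d' h
  rcases (ringE_eq_iff h).2 with h' | ⟨h1, h2⟩
  · exact h'
  · exact absurd (h1.trans (congrArg nxt h2)) (nxt_nxt_ne hl d)

lemma ring_walk (hl : 3 ≤ ℓ) (k : Bool × Fin 5 × Fin 2) (d0 : Fin ℓ) :
    ∀ n, ∃ w : (GraphLP ℓ p).Walk (cvert k d0) (cvert k (nxt^[n] d0)),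
      w.length = n ∧
      w.support = (List.range (n + 1)).map (fun m => cvert k (nxt^[m] d0)) ∧
      w.edges = (List.range n).map (fun m => (ringE k (nxt^[m] d0) : Sym2 (GV ℓ p))) := by
  intro n
  induction n with
  | zero => exact ⟨.nil, rfl, by simp [List.range_succ], by simp⟩
  | succ n ih =>
    obtain ⟨w, hlen, hsup, hedg⟩ := ih
    refine ⟨(w.concat (ring_adj hl k (nxt^[n] d0))).copy rfl
      (by rw [Function.iterate_succ_apply']), ?_, ?_, ?_⟩
    · rw [SimpleGraph.Walk.length_copy, SimpleGraph.Walk.length_concat, hlen]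
    · rw [SimpleGraph.Walk.support_copy, SimpleGraph.Walk.support_concat, hsup,
        List.range_succ (n := n + 1), List.map_append]
      simp [Function.iterate_succ_apply']
    · rw [SimpleGraph.Walk.edges_copy, SimpleGraph.Walk.edges_concat, hedg,
        List.range_succ (n := n), List.map_append, List.concat_eq_append]
      rfl

lemma ring_cycle (hl : 3 ≤ ℓ) (k : Bool × Fin 5 × Fin 2) (d0 : Fin ℓ) :
    ∃ c : (GraphLP ℓ p).Walk (cvert k d0) (cvert k d0), c.IsCycle ∧ c.length = ℓ := by
  have hl0 : 0 < ℓ := by omega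
  have hfix : nxt^[ℓ] d0 = d0 := by
    apply Fin.ext
    rw [iterate_nxt_val, Nat.add_mod_right, Nat.mod_eq_of_lt d0.isLt]
  obtain ⟨w, hlen, hsup, hedg⟩ := ring_walk (p := p) hl k d0 ℓ
  refine ⟨w.copy rfl (by rw [hfix]), ⟨⟨⟨?_⟩, ?_⟩, ?_⟩, ?_⟩
  · -- edges nodup
    rw [SimpleGraph.Walk.edges_copy, hedg]
    refine List.Nodup.map_on ?_ List.nodup_range
    intro m hm m' hm' hmm
    rw [List.mem_range] at hm hm'
    have := ringE_inj (p := p) hl k hmm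
    have hval := congrArg Fin.val this
    rw [iterate_nxt_val, iterate_nxt_val] at hval
    exact mod_inj (by omega) (by omega) hval
  · -- ne nil
    intro hnil
    have : (w.copy rfl (by rw [hfix])).length = 0 := by rw [hnil]; rfl
    rw [SimpleGraph.Walk.length_copy, hlen] at this
    omega
  · -- support tail nodup
    rw [SimpleGraph.Walk.support_copy, hsup, List.range_succ_eq_map, List.map_cons,
      List.tail_cons, List.map_map]
    refine List.Nodup.map_on ?_ List.nodup_range
    intro m hm m' hm' hmm
    rw [List.mem_range] at hm hm'
    simp only [Function.comp] at hmm
    have := (cvert_inj hmm).2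
    have hval := congrArg Fin.val this
    rw [iterate_nxt_val, iterate_nxt_val] at hval
    have : Nat.succ m = Nat.succ m' := mod_inj (by omega) (by omega) hval
    omega
  · rw [SimpleGraph.Walk.length_copy, hlen]

end GCN
namespace GCN
open SimpleGraph

variable {ℓ p : ℕ}

def depv : GV ℓ p → ℕ := fun z =>
  match z.1.2 with
  | .inl _ => 0
  | .inr (_, _, w) => bdep w

def regv : GV ℓ p → Option (Bool × Fin 5 × Fin 2) := fun z =>
  match z with
  | ((b, .inr (s, j, _)), _) => some (b, s, j)
  | _ => none

def isSpine : GV ℓ p → Prop := fun z =>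
  match z with
  | ((_, .inl _), none) => True
  | _ => False

lemma gAdj_dep {a b : GV ℓ p} (h : gAdj ℓ p a b) :
    depv a ≤ depv b + 1 ∧ depv b ≤ depv a + 1 := by
  rcases a with ⟨⟨b₁, x⟩, o₁⟩
  rcases b with ⟨⟨b₂, y⟩, o₂⟩
  have hdep : ∀ (bb : Bool) (xx : BaseV ℓ p) (oo oo' : Option (Fin 8)),
      depv ((bb, xx), oo) = depv ((bb, xx), oo') := fun _ _ _ _ => rfl
  rcases o₁ with _ | i₁ <;> rcases o₂ with _ | i₂ <;> simp only [gAdj] at h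
  · obtain ⟨rfl, hb⟩ := h
    rcases x with s | ⟨s, j, w⟩ <;> rcases y with s2 | ⟨s2, j2, w2⟩
    · simp only [depv]
      omega
    · rcases w2 with i | c <;> simp only [baseAdj] at hb <;>
        simp only [depv, bdep] <;> omega
    · rcases w with i | c <;> simp only [baseAdj] at hb <;>
        simp only [depv, bdep] <;> omega
    · rcases w with i | c <;> rcases w2 with i' | c' <;> simp only [baseAdj] at hb <;>
        simp only [depv, bdep] <;> omega
  · have hcore : (b₁, x) = ((b₂, y) : CoreV ℓ p) := h
    rw [show depv ((b₂, y), some i₂) = depv ((b₂, y), (none : Option (Fin 8))) from rfl,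
      ← hcore]
    omega
  · have hcore : (b₁, x) = ((b₂, y) : CoreV ℓ p) := h
    rw [show depv ((b₁, x), some i₁) = depv ((b₁, x), (none : Option (Fin 8))) from rfl,
      hcore]
    omega

lemma adj_dep {a b : GV ℓ p} (h : (GraphLP ℓ p).Adj a b) :
    depv a ≤ depv b + 1 ∧ depv b ≤ depv a + 1 := by
  rw [adj_iff] at h
  rcases h.2 with hg | hg
  · exact gAdj_dep hg
  · exact ⟨(gAdj_dep hg).2, (gAdj_dep hg).1⟩

lemma walk_dep {x y : GV ℓ p} (w : (GraphLP ℓ p).Walk x y) :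
    depv x ≤ depv y + w.length ∧ depv y ≤ depv x + w.length := by
  induction w with
  | nil => omega
  | @cons a a' v h q ih =>
    have h2 := adj_dep h
    rw [SimpleGraph.Walk.length_cons]
    omega

lemma gAdj_reg {a b : GV ℓ p} (h : gAdj ℓ p a b) (ha : ¬ isSpine a) (hb : ¬ isSpine b) :
    regv a = regv b := by
  rcases a with ⟨⟨b₁, x⟩, o₁⟩
  rcases b with ⟨⟨b₂, y⟩, o₂⟩
  rcases o₁ with _ | i₁ <;> rcases o₂ with _ | i₂ <;> simp only [gAdj] at h
  · obtain ⟨rfl, hbase⟩ := h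
    rcases x with s | ⟨s, j, w⟩ <;> rcases y with s2 | ⟨s2, j2, w2⟩
    · rfl
    · exact absurd trivial ha
    · exact absurd trivial hb
    · have heq : s = s2 ∧ j = j2 := by
        rcases w with i | c <;> rcases w2 with i' | c' <;> simp only [baseAdj] at hbase <;>
          exact ⟨hbase.1, hbase.2.1⟩
      simp only [regv, heq.1, heq.2]
  · have hcore : (b₁, x) = ((b₂, y) : CoreV ℓ p) := h
    rw [show regv ((b₂, y), some i₂) = regv ((b₂, y), (none : Option (Fin 8))) from by
      rcases y with s | ⟨s, j, w⟩ <;> rfl, ← hcore]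
  · have hcore : (b₁, x) = ((b₂, y) : CoreV ℓ p) := h
    rw [show regv ((b₁, x), some i₁) = regv ((b₁, x), (none : Option (Fin 8))) from by
      rcases x with s | ⟨s, j, w⟩ <;> rfl, hcore]

lemma adj_reg {a b : GV ℓ p} (h : (GraphLP ℓ p).Adj a b) (ha : ¬ isSpine a)
    (hb : ¬ isSpine b) : regv a = regv b := by
  rw [adj_iff] at h
  rcases h.2 with hg | hg
  · exact gAdj_reg hg ha hb
  · exact (gAdj_reg hg hb ha).symm

lemma walk_reg {x y : GV ℓ p} (w : (GraphLP ℓ p).Walk x y)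
    (hw : ∀ z ∈ w.support, ¬ isSpine z) : regv x = regv y := by
  induction w with
  | nil => rfl
  | @cons a a' v h q ih =>
    have h1 : ¬ isSpine a := hw _ (SimpleGraph.Walk.start_mem_support _)
    have h2 : ¬ isSpine a' := hw _ (by
      rw [SimpleGraph.Walk.support_cons]
      exact List.mem_cons_of_mem _ q.start_mem_support)
    exact (adj_reg h h1 h2).trans (ih fun z hz => hw z (by
      rw [SimpleGraph.Walk.support_cons]
      exact List.mem_cons_of_mem _ hz))

lemma walk_lower (hp : 1 ≤ p) {k k' : Bool × Fin 5 × Fin 2} {d d' : Fin ℓ} (hkk : k ≠ k')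
    (P : (GraphLP ℓ p).Walk (cvert k d) (cvert k' d')) : 2 * p ≤ P.length := by
  classical
  have hreg : regv (cvert k d : GV ℓ p) ≠ regv (cvert k' d' : GV ℓ p) := by
    obtain ⟨b, s, j⟩ := k
    obtain ⟨b', s', j'⟩ := k'
    simp only [cvert, regv, ne_eq, Option.some.injEq, Prod.mk.injEq]
    intro hcon
    exact hkk (by simp [Prod.ext_iff, hcon.1, hcon.2.1, hcon.2.2])
  have hz : ∃ z ∈ P.support, isSpine z := by
    by_contra hcon
    push_neg at hcon
    exact hreg (walk_reg P hcon)
  obtain ⟨z, hz, hsp⟩ := hz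
  have hdz : depv z = 0 := by
    rcases z with ⟨⟨bz, xz⟩, oz⟩
    rcases xz with sz | ⟨sz, jz, wz⟩
    · rfl
    · rcases oz with _ | iz <;> exact absurd hsp id
  have hd1 : depv (cvert k d : GV ℓ p) = p := rfl
  have hd2 : depv (cvert k' d' : GV ℓ p) = p := rfl
  have hsplit := congrArg SimpleGraph.Walk.length (P.take_spec hz)
  rw [SimpleGraph.Walk.length_append] at hsplit
  have hA := (walk_dep (P.takeUntil z hz)).1
  have hB := (walk_dep (P.dropUntil z hz)).2
  rw [hdz, hd1] at hA
  rw [hdz, hd2] at hB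
  omega

end GCN
namespace GCN
open SimpleGraph

variable {ℓ p : ℕ}

lemma av_one_ge (s : Fin 5) (j : Fin 2) (d0 : Fin ℓ) {m : ℕ} (hm : 1 ≤ m) :
    ∃ w, av s j d0 m = (.inr (s, j, w) : BaseV ℓ p) := by
  cases m with
  | zero => omega
  | succ n =>
    by_cases h : n < p - 1
    · exact ⟨_, av_path s j d0 h⟩
    · exact ⟨_, av_cyc s j d0 h⟩

lemma av_inj (s : Fin 5) (j : Fin 2) (d0 : Fin ℓ) {m m' : ℕ} (hm : m ≤ p) (hm' : m' ≤ p)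
    (h : (av s j d0 m : BaseV ℓ p) = av s j d0 m') : m = m' := by
  cases m with
  | zero =>
    cases m' with
    | zero => rfl
    | succ n' =>
      obtain ⟨w, hw⟩ := av_one_ge (p := p) s j d0 (m := n' + 1) (by omega)
      rw [av_zero, hw] at h
      exact absurd h (by simp)
  | succ n =>
    cases m' with
    | zero =>
      obtain ⟨w, hw⟩ := av_one_ge (p := p) s j d0 (m := n + 1) (by omega)
      rw [av_zero, hw] at h
      exact absurd h (by simp)
    | succ n' =>
      by_cases h1 : n < p - 1 <;> by_cases h2 : n' < p - 1
      · rw [av_path s j d0 h1, av_path s j d0 h2] at h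
        simp only [Sum.inr.injEq, Prod.mk.injEq, Sum.inl.injEq, Fin.mk.injEq, true_and] at h
        omega
      · rw [av_path s j d0 h1, av_cyc s j d0 h2] at h
        simp only [Sum.inr.injEq, Prod.mk.injEq, true_and] at h
        exact absurd h (by simp)
      · rw [av_cyc s j d0 h1, av_path s j d0 h2] at h
        simp only [Sum.inr.injEq, Prod.mk.injEq, true_and] at h
        exact absurd h (by simp)
      · omega

lemma att_walk (β : Bool) (s : Fin 5) (j : Fin 2) (d0 : Fin ℓ) (hd0 : d0.val = 0) :
    ∀ n, n ≤ p → ∃ w : (GraphLP ℓ p).Walk (((β, Sum.inl s), none) : GV ℓ p)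
      ((β, av s j d0 n), none),
      w.length = n ∧
      w.support = (List.range (n + 1)).map (fun m => (((β, av s j d0 m), none) : GV ℓ p)) := by
  intro n
  induction n with
  | zero => exact fun _ => ⟨.nil, rfl, by simp [List.range_succ, av_zero]⟩
  | succ n ih =>
    intro hn
    obtain ⟨w, hlen, hsup⟩ := ih (by omega)
    refine ⟨w.concat (av_adj β s j d0 hd0 hn), ?_, ?_⟩
    · rw [SimpleGraph.Walk.length_concat, hlen]
    · rw [SimpleGraph.Walk.support_concat, hsup, List.range_succ (n := n + 1),
        List.map_append]
      rfl

lemma cross_path (hp : 1 ≤ p) (β : Bool) (s : Fin 5) (d0 : Fin ℓ) (hd0 : d0.val = 0) :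
    ∃ P : (GraphLP ℓ p).Walk (cvert (β, s, 0) d0) (cvert (β, s, 1) d0),
      P.IsPath ∧ P.length = 2 * p := by
  obtain ⟨w0, hlen0, hsup0⟩ := att_walk β s 0 d0 hd0 p le_rfl
  obtain ⟨w1, hlen1, hsup1⟩ := att_walk β s 1 d0 hd0 p le_rfl
  have hend0 : (((β, av s 0 d0 p), none) : GV ℓ p) = cvert (β, s, 0) d0 := by
    rw [av_top s 0 d0 hp]; rfl
  have hend1 : (((β, av s 1 d0 p), none) : GV ℓ p) = cvert (β, s, 1) d0 := by
    rw [av_top s 1 d0 hp]; rfl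
  refine ⟨(w0.reverse.append w1).copy hend0 hend1, ?_, ?_⟩
  · apply SimpleGraph.Walk.IsPath.mk'
    have hsup1' : w1.support.tail =
        (List.range p).map (fun m => (((β, av s 1 d0 (Nat.succ m)), none) : GV ℓ p)) := by
      rw [hsup1, List.range_succ_eq_map]
      simp only [List.map_cons, List.tail_cons, List.map_map]
      rfl
    rw [SimpleGraph.Walk.support_copy, SimpleGraph.Walk.support_append,
      SimpleGraph.Walk.support_reverse, hsup0, hsup1']
    rw [List.nodup_append]
    refine ⟨List.nodup_reverse.mpr (List.Nodup.map_on ?_ List.nodup_range),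
      List.Nodup.map_on ?_ List.nodup_range, ?_⟩
    · intro m hm m' hm' hmm
      rw [List.mem_range] at hm hm'
      simp only [Prod.mk.injEq, and_true, true_and] at hmm
      exact av_inj s 0 d0 (by omega) (by omega) hmm
    · intro m hm m' hm' hmm
      rw [List.mem_range] at hm hm'
      simp only [Prod.mk.injEq, and_true, true_and] at hmm
      have := av_inj s 1 d0 (by omega) (by omega) hmm
      omega
    · intro a ha b' hb hab'
      subst hab'
      rw [List.mem_reverse, List.mem_map] at ha
      rw [List.mem_map] at hb
      obtain ⟨m, hm, rfl⟩ := ha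
      obtain ⟨m', hm', hab⟩ := hb
      rw [List.mem_range] at hm hm'
      simp only [Prod.mk.injEq, and_true, true_and] at hab
      obtain ⟨w', hw'⟩ := av_one_ge (p := p) s 1 d0 (m := Nat.succ m') (by omega)
      rw [hw'] at hab
      cases m with
      | zero =>
        rw [av_zero] at hab
        exact absurd hab.symm (by simp)
      | succ n =>
        obtain ⟨w'', hw''⟩ := av_one_ge (p := p) s 0 d0 (m := Nat.succ n) (by omega)
        rw [hw''] at hab
        simp only [Sum.inr.injEq, Prod.mk.injEq] at hab
        exact absurd hab.2.1 (by decide)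
  · rw [SimpleGraph.Walk.length_copy, SimpleGraph.Walk.length_append,
      SimpleGraph.Walk.length_reverse, hlen0, hlen1]
    omega

end GCN
namespace GCN
open SimpleGraph

variable {ℓ p : ℕ}

lemma leaf_adj_iff {x : CoreV ℓ p} {i : Fin 8} {z : GV ℓ p} :
    (GraphLP ℓ p).Adj (x, some i) z ↔ z = (x, none) := by
  constructor
  · intro h
    exact adj_leaf h.symm
  · rintro rfl
    rw [adj_iff]
    exact ⟨by simp, Or.inl (show (x : CoreV ℓ p) = x from rfl)⟩

lemma leaf_degree (x : CoreV ℓ p) (i : Fin 8) :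
    (GraphLP ℓ p).degree (x, some i) = 1 := by
  classical
  have h : (GraphLP ℓ p).neighborFinset (x, some i) = {((x, none) : GV ℓ p)} := by
    ext z
    rw [SimpleGraph.mem_neighborFinset, leaf_adj_iff, Finset.mem_singleton]
  rw [← SimpleGraph.card_neighborFinset_eq_degree, h, Finset.card_singleton]

lemma pendant_count (v : GV ℓ p) (hv : (GraphLP ℓ p).degree v ≠ 1) :
    8 ≤ {u : GV ℓ p | (GraphLP ℓ p).Adj v u ∧ (GraphLP ℓ p).degree u = 1}.ncard := by
  classical
  obtain ⟨x, o⟩ := v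
  rcases o with _ | i
  · have hsub : Set.range (fun i : Fin 8 => ((x, some i) : GV ℓ p)) ⊆
        {u : GV ℓ p | (GraphLP ℓ p).Adj (x, none) u ∧ (GraphLP ℓ p).degree u = 1} := by
      rintro z ⟨i, rfl⟩
      exact ⟨(leaf_adj_iff.mpr rfl).symm, leaf_degree x i⟩
    have hrange : (Set.range (fun i : Fin 8 => ((x, some i) : GV ℓ p))).ncard = 8 := by
      rw [← Set.image_univ, Set.ncard_image_of_injective _ (fun a b h => by
        simpa using h), Set.ncard_univ, Nat.card_eq_fintype_card, Fintype.card_fin]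
    calc (8 : ℕ) = _ := hrange.symm
    _ ≤ _ := Set.ncard_le_ncard hsub (Set.toFinite _)
  · exact absurd (leaf_degree x i) hv

end GCN
open GCN in
/-- For every odd `ℓ ≥ 3` and every `p ≥ 1`, the graph `G(ℓ, p)` is a cactus, its girth equals
`ℓ`, its cycle-distance equals `2p`, every cycle of `G(ℓ, p)` is odd, and every vertex of
`G(ℓ, p)` that is not a leaf has at least 8 pendant neighbors. -/
theorem statement9 (ℓ p : ℕ) (hodd : Odd ℓ) (hl : 3 ≤ ℓ) (hp : 1 ≤ p) :
    IsCactus (GraphLP ℓ p) ∧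
    (GraphLP ℓ p).egirth = (ℓ : ℕ∞) ∧
    cycleDistance (GraphLP ℓ p) = ((2 * p : ℕ) : ℕ∞) ∧
    (∀ (u : GV ℓ p) (w : (GraphLP ℓ p).Walk u u), w.IsCycle → Odd w.length) ∧
    (∀ v : GV ℓ p, (GraphLP ℓ p).degree v ≠ 1 →
      8 ≤ {u : GV ℓ p | (GraphLP ℓ p).Adj v u ∧ (GraphLP ℓ p).degree u = 1}.ncard) := by
  have hl0 : 0 < ℓ := by omega
  set d0 : Fin ℓ := ⟨0, hl0⟩ with hd0def
  have hd0 : d0.val = 0 := rfl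
  refine ⟨?_, ?_, ?_, ?_, fun v hv => pendant_count v hv⟩
  · -- cactus
    intro u v c₁ c₂ hc₁ hc₂ e he₁ he₂ e'
    obtain ⟨k₁, dd₁, hu₁, hlen₁, hiff₁⟩ := cycle_spec hl hp c₁ hc₁
    obtain ⟨k₂, dd₂, hu₂, hlen₂, hiff₂⟩ := cycle_spec hl hp c₂ hc₂
    obtain ⟨da, hea⟩ := (hiff₁ e).mp he₁
    obtain ⟨db, heb⟩ := (hiff₂ e).mp he₂
    have hk : k₁ = k₂ := (ringE_eq_iff (hea.symm.trans heb)).1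
    rw [hiff₁, hiff₂, hk]
  · -- girth
    apply le_antisymm
    · obtain ⟨c₀, hc₀, hlen₀⟩ := ring_cycle (p := p) hl (false, 0, 0) d0
      have hle : (GraphLP ℓ p).egirth ≤ (c₀.length : ℕ∞) := by
        rw [SimpleGraph.egirth]
        exact iInf_le_of_le _ (iInf_le_of_le c₀ (iInf_le _ hc₀))
      rwa [hlen₀] at hle
    · rw [SimpleGraph.le_egirth]
      intro a w hw
      obtain ⟨k, dd, -, hlen, -⟩ := cycle_spec hl hp w hw
      rw [hlen]
  · -- cycle distance
    apply le_antisymm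
    · obtain ⟨c₁, hc₁, hlen₁⟩ := ring_cycle (p := p) hl (false, 0, 0) d0
      obtain ⟨c₂, hc₂, hlen₂⟩ := ring_cycle (p := p) hl (false, 0, 1) d0
      obtain ⟨P, hP, hPlen⟩ := cross_path hp false 0 d0 hd0
      have hne : ¬ ∀ e : Sym2 (GV ℓ p), e ∈ c₁.edges ↔ e ∈ c₂.edges := by
        intro hall
        obtain ⟨k₁, dd₁, hu₁, -, hiff₁⟩ := cycle_spec hl hp c₁ hc₁
        obtain ⟨k₂, dd₂, hu₂, -, hiff₂⟩ := cycle_spec hl hp c₂ hc₂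
        obtain ⟨rfl, -⟩ := cvert_inj hu₁
        obtain ⟨rfl, -⟩ := cvert_inj hu₂
        have h1 : (ringE (false, 0, 0) d0 : Sym2 (GV ℓ p)) ∈ c₁.edges :=
          (hiff₁ _).mpr ⟨d0, rfl⟩
        obtain ⟨d', hd'⟩ := (hiff₂ _).mp ((hall _).mp h1)
        have := (ringE_eq_iff hd').1
        simp [Prod.ext_iff] at this
      have hcd : cycleDistance (GraphLP ℓ p) ≤ (P.length : ℕ∞) := by
        rw [cycleDistance]
        exact iInf_le_of_le _ (iInf_le_of_le _ (iInf_le_of_le c₁ (iInf_le_of_le c₂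
          (iInf_le_of_le hc₁ (iInf_le_of_le hc₂ (iInf_le_of_le hne
            (iInf_le_of_le P (iInf_le _ hP))))))))
      rwa [hPlen] at hcd
    · rw [cycleDistance]
      simp only [le_iInf_iff]
      intro u v c₁ c₂ hc₁ hc₂ hne P hP
      obtain ⟨k₁, dd₁, hu₁, -, hiff₁⟩ := cycle_spec hl hp c₁ hc₁
      obtain ⟨k₂, dd₂, hu₂, -, hiff₂⟩ := cycle_spec hl hp c₂ hc₂
      have hkk : k₁ ≠ k₂ := by
        rintro rfl
        exact hne fun e => (hiff₁ e).trans (hiff₂ e).symm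
      have hlow := walk_lower hp hkk ((P.copy hu₁ hu₂))
      rw [SimpleGraph.Walk.length_copy] at hlow
      exact_mod_cast hlow
  · -- odd cycles
    intro u w hw
    obtain ⟨k, dd, -, hlen, -⟩ := cycle_spec hl hp w hw
    rw [hlen]
    exact hodd
end
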